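/- arXiv:1206.0185 — 3 statements merged into one kernel-verified Lean document; each statement's English description precedes it below -/
import Mathlib

section
/- If every cyclic subgroup of prime power order of a finite group G is F*(G)-conjugate-permutable, then G is nilpotent. -/
open scoped Pointwise

section Defs

variable {G : Type*} [Group G]

/-- The conjugate `H^x = x⁻¹ H x` of a subgroup `H` of `G`. -/
def conjS (x : G) (H : Subgroup G) : Subgroup G :=
  H.map (MulAut.conj x⁻¹).toMonoidHom

/-- A subgroup `H` of `G` is `R`-conjugate-permutable (for a subset `R ⊆ G`) if
`H · H^x = H^x · H` as subsets of `G`, for all `x ∈ R`. -/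
def IsRCP (R : Set G) (H : Subgroup G) : Prop :=
  ∀ x ∈ R, (H : Set G) * (conjS x H : Set G) = (conjS x H : Set G) * (H : Set G)

/-- A subgroup `H` of `G` is conjugate-permutable if `H · H^x = H^x · H` for all `x ∈ G`. -/
def IsConjPermutable (H : Subgroup G) : Prop :=
  IsRCP (Set.univ : Set G) H

/-- `N` is a minimal normal subgroup of `G`. -/
def IsMinimalNormal (N : Subgroup G) : Prop :=
  N.Normal ∧ N ≠ ⊥ ∧ ∀ K : Subgroup G, K.Normal → K ≤ N → K = ⊥ ∨ K = N

/-- `H` is an abnormal subgroup of `G`: `x ∈ ⟨H, H^x⟩` for all `x ∈ G`. -/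
def IsAbnormal (H : Subgroup G) : Prop :=
  ∀ x : G, x ∈ H ⊔ conjS x H

/-- `H` is normal in the subgroup `K` of `G`. -/
def IsNormalIn (H K : Subgroup G) : Prop :=
  H ≤ K ∧ ∀ x ∈ K, ∀ h ∈ H, x * h * x⁻¹ ∈ H

/-- `H` is subnormal in the subgroup `K`: there is a chain
`H = H₀ ◁ H₁ ◁ ⋯ ◁ Hₙ = K` with each term normal in the next. -/
def IsSubnormalIn (H K : Subgroup G) : Prop :=
  ∃ (n : ℕ) (s : Fin (n + 1) → Subgroup G),
    s 0 = H ∧ s (Fin.last n) = K ∧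
    ∀ i : Fin n, s i.castSucc ≤ s i.succ ∧
      ∀ x ∈ s i.succ, ∀ h ∈ s i.castSucc, x * h * x⁻¹ ∈ s i.castSucc

/-- `H` is pronormal in the subgroup `K`: for every `x ∈ K`, the subgroups `H` and `H^x`
are conjugate in `⟨H, H^x⟩`. -/
def IsPronormalIn (H K : Subgroup G) : Prop :=
  H ≤ K ∧ ∀ x ∈ K, ∃ k ∈ H ⊔ conjS x H, conjS k H = conjS x H

end Defs

/-- The socle of `G`: the subgroup generated by all minimal normal subgroups of `G`. -/
def socle' (G : Type*) [Group G] : Subgroup G :=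
  sSup {N : Subgroup G | IsMinimalNormal N}

/-- `F̃(G)`: the subgroup of `G` containing the Frattini subgroup `Φ(G)` with
`F̃(G)/Φ(G) = Soc(G/Φ(G))`. -/
def Ftilde (G : Type*) [Group G] : Subgroup G :=
  (socle' (G ⧸ frattini G)).comap (QuotientGroup.mk' (frattini G))

/-- The Fitting subgroup `F(G)`: the largest normal nilpotent subgroup of `G`
(the subgroup generated by all normal nilpotent subgroups). -/
def Fitting (G : Type*) [Group G] : Subgroup G :=
  sSup {N : Subgroup G | N.Normal ∧ Group.IsNilpotent N}

section FittingNormal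

variable {G : Type*} [Group G]

lemma map_conj_eq_self {N : Subgroup G} (hN : N.Normal) (g : G) :
    N.map (MulAut.conj g).toMonoidHom = N := by
  ext x
  simp only [Subgroup.mem_map, MulEquiv.coe_toMonoidHom, MulAut.conj_apply]
  constructor
  · rintro ⟨n, hn, rfl⟩; exact hN.conj_mem n hn g
  · intro hx
    refine ⟨g⁻¹ * x * g, by simpa using hN.conj_mem x hx g⁻¹, by group⟩

instance Fitting_normal (G : Type*) [Group G] : (Fitting G).Normal := by
  constructor
  intro n hn g
  have h1 : (Fitting G).map (MulAut.conj g).toMonoidHom = Fitting G := by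
    unfold Fitting
    rw [sSup_eq_iSup, Subgroup.map_iSup]
    refine iSup_congr fun N => ?_
    rw [Subgroup.map_iSup]
    exact iSup_congr_Prop Iff.rfl fun hN => map_conj_eq_self hN.1 g
  rw [← h1]
  exact Subgroup.mem_map.2 ⟨n, hn, rfl⟩

end FittingNormal

/-- The generalized Fitting subgroup `F*(G)`: the subgroup containing `F(G)` with
`F*(G)/F(G) = Soc(C_G(F(G))·F(G)/F(G))`. -/
def FStar (G : Type*) [Group G] : Subgroup G :=
  Subgroup.comap (QuotientGroup.mk' (Fitting G))
    (Subgroup.map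
      ((Subgroup.centralizer (Fitting G : Set G) ⊔ Fitting G).map
          (QuotientGroup.mk' (Fitting G))).subtype
      (socle' ((Subgroup.centralizer (Fitting G : Set G) ⊔ Fitting G).map
          (QuotientGroup.mk' (Fitting G)))))

/-- A group is supersoluble if it has a normal series all of whose terms are
normal in the whole group and all of whose factors are cyclic; the factor
`s (i+1) / s i` being cyclic is expressed by `s (i+1) ≤ s i ⊔ ⟨g⟩` for some `g`. -/
def IsSupersoluble (G : Type*) [Group G] : Prop :=
  ∃ (n : ℕ) (s : Fin (n + 1) → Subgroup G),
    Monotone s ∧ s 0 = ⊥ ∧ s (Fin.last n) = ⊤ ∧ (∀ i, (s i).Normal) ∧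
    ∀ i : Fin n, ∃ g : G, s i.succ ≤ s i.castSucc ⊔ Subgroup.zpowers g

/-- A group is metanilpotent if it has a normal nilpotent subgroup with
nilpotent quotient. -/
def IsMetanilpotent (G : Type*) [Group G] : Prop :=
  ∃ (N : Subgroup G) (hN : N.Normal),
    Group.IsNilpotent N ∧
      @Group.IsNilpotent (G ⧸ N) (@QuotientGroup.Quotient.group G _ N hN)


section AuxConj

variable {G : Type*} [Group G]

lemma mem_conjS {x g : G} {H : Subgroup G} : g ∈ conjS x H ↔ ∃ h ∈ H, x⁻¹ * h * x = g := by
  simp [conjS, Subgroup.mem_map, MulAut.conj_apply, mul_assoc]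

lemma conjS_one (H : Subgroup G) : conjS 1 H = H := by
  ext g; simp [mem_conjS]

lemma conjS_conjS (a b : G) (H : Subgroup G) : conjS a (conjS b H) = conjS (b * a) H := by
  ext g
  simp only [mem_conjS]
  constructor
  · rintro ⟨h, ⟨h', hh', rfl⟩, rfl⟩
    exact ⟨h', hh', by group⟩
  · rintro ⟨h, hh, rfl⟩
    exact ⟨b⁻¹ * h * b, ⟨h, hh, rfl⟩, by group⟩

lemma conjS_le {H K : Subgroup G} (hH : H ≤ K) {x : G} (hx : x ∈ K) : conjS x H ≤ K := by
  intro g hg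
  obtain ⟨h, hh, rfl⟩ := mem_conjS.1 hg
  exact mul_mem (mul_mem (inv_mem hx) (hH hh)) hx

lemma conjS_bot (x : G) : conjS x (⊥ : Subgroup G) = ⊥ := by
  ext g; simp [mem_conjS, eq_comm]

lemma conjS_sup (x : G) (A B : Subgroup G) : conjS x (A ⊔ B) = conjS x A ⊔ conjS x B :=
  Subgroup.map_sup _ _ _

lemma conjS_pgroup {p : ℕ} {H : Subgroup G} (h : IsPGroup p H) (x : G) :
    IsPGroup p (conjS x H) := IsPGroup.map h _

lemma coe_conjS_image (x : G) (H : Subgroup G) :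
    ((MulAut.conj x⁻¹).toMonoidHom : G →* G) '' (H : Set G) = (conjS x H : Set G) :=
  (Subgroup.coe_map _ _).symm

lemma pairwise_perm {K H : Subgroup G} (hH : IsRCP (K : Set G) H) {a b : G} (ha : a ∈ K)
    (hb : b ∈ K) :
    (conjS a H : Set G) * (conjS b H : Set G) = (conjS b H : Set G) * (conjS a H : Set G) := by
  have h0 := hH (b * a⁻¹) (by exact SetLike.mem_coe.2 (mul_mem hb (inv_mem ha)))
  have himg := congrArg (fun s => ((MulAut.conj a⁻¹).toMonoidHom : G →* G) '' s) h0
  simp only [Set.image_mul] at himg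
  rw [coe_conjS_image] at himg
  have e2 : ((MulAut.conj a⁻¹).toMonoidHom : G →* G) '' ((conjS (b * a⁻¹) H : Subgroup G) : Set G)
      = (conjS b H : Set G) := by
    rw [coe_conjS_image]
    show ((conjS a (conjS (b * a⁻¹) H) : Subgroup G) : Set G) = _
    rw [conjS_conjS, show b * a⁻¹ * a = b by group]
  rw [e2] at himg
  exact himg

lemma coe_sup_of_perm {A B : Subgroup G} (h : (A : Set G) * B = (B : Set G) * A) :
    ((A ⊔ B : Subgroup G) : Set G) = (A : Set G) * B := by
  apply Set.Subset.antisymm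
  · intro x hx
    have hx' : x ∈ Subgroup.closure ((A : Set G) ∪ B) := by
      rwa [← Subgroup.sup_eq_closure]
    clear hx
    induction hx' using Subgroup.closure_induction with
    | mem y hy =>
      rcases hy with hy | hy
      · exact ⟨y, hy, 1, B.one_mem, mul_one y⟩
      · exact ⟨1, A.one_mem, y, hy, one_mul y⟩
    | one => exact ⟨1, A.one_mem, 1, B.one_mem, one_mul 1⟩
    | mul u v hu hv ihu ihv =>
      obtain ⟨a, ha, b, hb, rfl⟩ := ihu
      obtain ⟨a', ha', b', hb', rfl⟩ := ihv
      have hba : b * a' ∈ (A : Set G) * B := by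
        rw [h]
        exact ⟨b, hb, a', ha', rfl⟩
      obtain ⟨a'', ha'', b'', hb'', he⟩ := hba
      refine ⟨a * a'', mul_mem ha ha'', b'' * b', mul_mem hb'' hb', ?_⟩
      calc a * a'' * (b'' * b') = a * (a'' * b'') * b' := by group
        _ = a * (b * a') * b' := by rw [show a'' * b'' = b * a' from he]
        _ = a * b * (a' * b') := by group
    | inv u hu ihu =>
      obtain ⟨a, ha, b, hb, rfl⟩ := ihu
      have : b⁻¹ * a⁻¹ ∈ (B : Set G) * A := ⟨b⁻¹, inv_mem hb, a⁻¹, inv_mem ha, rfl⟩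
      rw [← h] at this
      rwa [mul_inv_rev]
  · rintro x ⟨a, ha, b, hb, rfl⟩
    exact mul_mem ((le_sup_left : A ≤ A ⊔ B) ha) ((le_sup_right : B ≤ A ⊔ B) hb)

end AuxConj


section AuxCard

variable {G : Type*} [Group G] [Finite G]

lemma card_sup_dvd_of_perm {A B : Subgroup G}
    (h : ((A ⊔ B : Subgroup G) : Set G) = (A : Set G) * B) :
    Nat.card (A ⊔ B : Subgroup G) ∣ Nat.card A * Nat.card B := by
  classical
  set L := A ⊔ B with hL
  set B' : Subgroup ↥L := B.subgroupOf L with hB'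
  set D : Subgroup ↥A := (A ⊓ B).subgroupOf A with hD
  have key : Nat.card (↥A ⧸ D) = Nat.card (↥L ⧸ B') := by
    apply Nat.card_congr
    refine Equiv.ofBijective (fun x => Quotient.liftOn' x
      (fun a => (QuotientGroup.mk (⟨(a : G), (le_sup_left : A ≤ L) a.2⟩ : ↥L) : ↥L ⧸ B')) ?_)
      ⟨?_, ?_⟩
    · intro a b hab
      have hab' : a⁻¹ * b ∈ D := QuotientGroup.leftRel_apply.1 hab
      apply Quotient.sound'
      rw [QuotientGroup.leftRel_apply]
      have : ((a⁻¹ * b : ↥A) : G) ∈ A ⊓ B := hab'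
      rw [Subgroup.mem_subgroupOf]
      simpa using this.2
    · intro x y
      refine Quotient.inductionOn₂' x y ?_
      intro a b hab
      apply Quotient.sound'
      rw [QuotientGroup.leftRel_apply]
      have hab2 := Quotient.exact' hab
      rw [QuotientGroup.leftRel_apply, Subgroup.mem_subgroupOf] at hab2
      rw [Subgroup.mem_subgroupOf]
      refine Subgroup.mem_inf.2 ⟨mul_mem (inv_mem a.2) b.2, by simpa using hab2⟩
    · intro x
      refine Quotient.inductionOn' x ?_
      intro l
      have hl : (l : G) ∈ (A : Set G) * B := by rw [← h]; exact l.2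
      obtain ⟨a, ha, b, hb, hab⟩ := hl
      have haA : a ∈ A := ha
      have haL : a ∈ L := (le_sup_left : A ≤ L) haA
      refine ⟨Quotient.mk'' ⟨a, haA⟩, ?_⟩
      apply Quotient.sound'
      rw [QuotientGroup.leftRel_apply, Subgroup.mem_subgroupOf]
      show ((⟨a, haL⟩ : ↥L)⁻¹ * l : G) ∈ B
      have he : ((⟨a, haL⟩ : ↥L)⁻¹ * l : G) = a⁻¹ * (a * b) := by
        simp [show ((l : G)) = a * b from hab.symm]
      rw [he, inv_mul_cancel_left]; exact hb
  have lag1 := Subgroup.card_eq_card_quotient_mul_card_subgroup B'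
  have lag2 := Subgroup.card_eq_card_quotient_mul_card_subgroup D
  have hBB : Nat.card B' = Nat.card B :=
    Nat.card_congr (Subgroup.subgroupOfEquivOfLe (le_sup_right : B ≤ L)).toEquiv
  refine ⟨Nat.card D, ?_⟩
  calc Nat.card ↥A * Nat.card ↥B
      = (Nat.card (↥A ⧸ D) * Nat.card D) * Nat.card B := by rw [← lag2]
    _ = (Nat.card (↥L ⧸ B') * Nat.card B') * Nat.card D := by rw [key, hBB]; ring
    _ = Nat.card ↥L * Nat.card D := by rw [← lag1]

lemma sup_pgroup_of_perm {p : ℕ} [Fact p.Prime] {A B : Subgroup G}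
    (hA : IsPGroup p A) (hB : IsPGroup p B) (h : (A : Set G) * B = (B : Set G) * A) :
    IsPGroup p (A ⊔ B : Subgroup G) := by
  obtain ⟨m, hm⟩ := IsPGroup.iff_card.1 hA
  obtain ⟨n, hn⟩ := IsPGroup.iff_card.1 hB
  have hd := card_sup_dvd_of_perm (coe_sup_of_perm h)
  rw [hm, hn, ← pow_add] at hd
  obtain ⟨k, -, hk⟩ := (Nat.dvd_prime_pow (Fact.out : p.Prime)).1 hd
  exact IsPGroup.of_card hk

end AuxCard


section AuxPrimary

variable {G : Type*} [Group G] [Finite G]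

lemma primary_decomp {q : ℕ} (hq : q.Prime) (g : G) :
    ∃ a b : G, g = a * b ∧ a ∈ Subgroup.zpowers g ∧ b ∈ Subgroup.zpowers g ∧
      (∃ k, orderOf a = q ^ k) ∧ ¬ q ∣ orderOf b := by
  set n := orderOf g with hn
  have hn0 : n ≠ 0 := (orderOf_pos g).ne'
  set e := n.factorization q with he
  have hsplit : q ^ e * (n / q ^ e) = n := Nat.ordProj_mul_ordCompl_eq_self n q
  set m := n / q ^ e with hm
  have hqm : ¬ q ∣ m := Nat.not_dvd_ordCompl hq hn0
  have hco : Nat.Coprime (q ^ e) m :=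
    Nat.Coprime.pow_left _ ((Nat.Prime.coprime_iff_not_dvd hq).2 hqm)
  have hcoZ : IsCoprime ((q : ℤ) ^ e) (m : ℤ) := by
    rw [Int.isCoprime_iff_gcd_eq_one]
    exact_mod_cast hco
  obtain ⟨u, v, huv⟩ := hcoZ
  have hgn : g ^ (n : ℤ) = 1 := by
    rw [zpow_natCast, hn]
    exact pow_orderOf_eq_one g
  refine ⟨g ^ (v * (m : ℤ)), g ^ (u * (q : ℤ) ^ e), ?_, ⟨v * (m : ℤ), rfl⟩,
    ⟨u * (q : ℤ) ^ e, rfl⟩, ?_, ?_⟩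
  · rw [← zpow_add]
    rw [show v * (m : ℤ) + u * (q : ℤ) ^ e = 1 by linarith [huv], zpow_one]
  · have hpow : (g ^ (v * (m : ℤ))) ^ (q ^ e : ℕ) = 1 := by
      rw [← zpow_natCast, ← zpow_mul]
      have : v * (m : ℤ) * ((q ^ e : ℕ) : ℤ) = (n : ℤ) * v := by
        push_cast
        rw [← hsplit]
        push_cast
        ring
      rw [this, zpow_mul, hgn, one_zpow]
    have hdvd := orderOf_dvd_of_pow_eq_one hpow
    obtain ⟨k, -, hk⟩ := (Nat.dvd_prime_pow hq).1 hdvd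
    exact ⟨k, hk⟩
  · have hpow : (g ^ (u * (q : ℤ) ^ e)) ^ m = 1 := by
      rw [← zpow_natCast, ← zpow_mul]
      have : u * (q : ℤ) ^ e * (m : ℤ) = (n : ℤ) * u := by
        push_cast
        rw [← hsplit]
        push_cast
        ring
      rw [this, zpow_mul, hgn, one_zpow]
    have hdvd := orderOf_dvd_of_pow_eq_one hpow
    intro hqd
    exact hqm (hqd.trans hdvd)

lemma mem_closure_primary (g : G) :
    g ∈ Subgroup.closure
      {y : G | y ∈ Subgroup.zpowers g ∧ ∃ p k, Nat.Prime p ∧ orderOf y = p ^ k} := by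
  suffices H : ∀ n : ℕ, ∀ g : G, orderOf g = n →
      g ∈ Subgroup.closure
        {y : G | y ∈ Subgroup.zpowers g ∧ ∃ p k, Nat.Prime p ∧ orderOf y = p ^ k} from
    H _ g rfl
  intro n
  induction n using Nat.strong_induction_on with
  | _ n ih =>
    intro g hg
    rcases eq_or_ne n 1 with h1 | h1
    · have hg1 : g = 1 := orderOf_eq_one_iff.1 (by rw [hg, h1])
      rw [hg1]; exact one_mem _
    have hn0 : n ≠ 0 := by rw [← hg]; exact (orderOf_pos g).ne'
    obtain ⟨q, hq, hqn⟩ := Nat.exists_prime_and_dvd h1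
    obtain ⟨a, b, hab, haz, hbz, hak, hbq⟩ := primary_decomp hq g
    have hbdvd : orderOf b ∣ n := hg ▸ orderOf_dvd_of_mem_zpowers hbz
    have hblt : orderOf b < n := by
      refine lt_of_le_of_ne (Nat.le_of_dvd (Nat.pos_of_ne_zero hn0) hbdvd) ?_
      intro hbn
      exact hbq (hbn ▸ hqn)
    have hb' := ih (orderOf b) hblt b rfl
    have hsub : {y : G | y ∈ Subgroup.zpowers b ∧ ∃ p k, Nat.Prime p ∧ orderOf y = p ^ k} ⊆
        {y : G | y ∈ Subgroup.zpowers g ∧ ∃ p k, Nat.Prime p ∧ orderOf y = p ^ k} :=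
      fun y hy => ⟨(Subgroup.zpowers_le.2 hbz) hy.1, hy.2⟩
    have hb'' := (Subgroup.closure_mono hsub) hb'
    have ha : a ∈ Subgroup.closure
        {y : G | y ∈ Subgroup.zpowers g ∧ ∃ p k, Nat.Prime p ∧ orderOf y = p ^ k} :=
      Subgroup.subset_closure ⟨haz, q, hak.choose, hq, hak.choose_spec⟩
    have hfin := mul_mem ha hb''
    rwa [← hab] at hfin

lemma primary_mul_of_nilpotent {H : Type*} [Group H] [Finite H] (hnil : Group.IsNilpotent H)
    {r : ℕ} (hr : r.Prime) {a b : H} (ha : ∃ k, orderOf a = r ^ k) (hb : ∃ k, orderOf b = r ^ k) :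
    ∃ k, orderOf (a * b) = r ^ k := by
  haveI : Fact r.Prime := ⟨hr⟩
  have h03 := (isNilpotent_of_finite_tfae (G := H)).out 0 3
  have hsyl0 : ∀ (p : ℕ) (_hp : Fact p.Prime) (P : Sylow p H), (↑P : Subgroup H).Normal :=
    h03.mp hnil
  have hsyl : ∀ P : Sylow r H, (↑P : Subgroup H).Normal := fun P => hsyl0 r ⟨hr⟩ P
  obtain ⟨P⟩ := (inferInstance : Nonempty (Sylow r H))
  have hmem : ∀ x : H, (∃ k, orderOf x = r ^ k) → x ∈ (P : Subgroup H) := by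
    rintro x ⟨k, hk⟩
    have hx : IsPGroup r (Subgroup.zpowers x) :=
      IsPGroup.of_card (by rw [Nat.card_zpowers, hk])
    obtain ⟨Q, hQ⟩ := hx.exists_le_sylow
    haveI := hsyl P
    haveI := hsyl Q
    have hQP : Q = P := by
      obtain ⟨gq, hgq⟩ := MulAction.exists_smul_eq H Q P
      calc Q = gq • Q := (Sylow.smul_eq_of_normal).symm
        _ = P := hgq
    exact hQP ▸ hQ (Subgroup.mem_zpowers x)
  have hab : a * b ∈ (P : Subgroup H) := mul_mem (hmem a ha) (hmem b hb)
  obtain ⟨k, hk⟩ := P.2 ⟨a * b, hab⟩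
  have hco : (a * b) ^ (r ^ k) = 1 := by
    have := congrArg (Subgroup.subtype (P : Subgroup H)) hk
    simpa using this
  obtain ⟨i, -, hi⟩ := (Nat.dvd_prime_pow hr).1 (orderOf_dvd_of_pow_eq_one hco)
  exact ⟨i, hi⟩

lemma orderOf_conj (x f : G) : orderOf (x⁻¹ * f * x) = orderOf f := by
  have : x⁻¹ * f * x = (MulAut.conj x⁻¹).toMonoidHom f := by
    simp [MulAut.conj_apply]
  rw [this, orderOf_injective _ (MulAut.conj x⁻¹).injective]

end AuxPrimary


section AuxRCP

variable {G : Type*} [Group G] [Finite G]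

lemma isCyclic_zpowers (x : G) : IsCyclic ↥(Subgroup.zpowers x) := by
  refine ⟨⟨⟨x, Subgroup.mem_zpowers x⟩, ?_⟩⟩
  rintro ⟨y, hy⟩
  obtain ⟨n, rfl⟩ := Subgroup.mem_zpowers_iff.1 hy
  exact ⟨n, by ext; simp⟩

lemma nilpotent_of_RCP (K : Subgroup G)
    (h : ∀ H : Subgroup G, IsCyclic ↥H → IsPrimePow (Nat.card ↥H) → IsRCP (K : Set G) H) :
    Group.IsNilpotent ↥K := by
  classical
  have h30 := (isNilpotent_of_finite_tfae (G := ↥K)).out 3 0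
  refine h30.mp ?_
  intro q hq Q
  haveI : Fact q.Prime := hq
  set 𝒮 : Set (Subgroup G) :=
    {N | N ≤ K ∧ IsPGroup q ↥N ∧ ∀ r ∈ K, conjS r N = N} with h𝒮
  haveI : Finite (Subgroup G) := Finite.of_injective (fun J => (J : Set G)) SetLike.coe_injective
  have hbot : ⊥ ∈ 𝒮 := ⟨bot_le, IsPGroup.of_bot, fun r _ => conjS_bot r⟩
  obtain ⟨M, hM, hMmax⟩ :=
    Set.Finite.exists_maximalFor id 𝒮 (Set.toFinite 𝒮) ⟨⊥, hbot⟩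
  replace hMmax : ∀ a' ∈ 𝒮, id M ≤ id a' → id M = id a' :=
    fun a' ha' hle => le_antisymm hle (hMmax ha' hle)
  have habsorb : ∀ N ∈ 𝒮, N ≤ M := by
    intro N hN
    have hperm : (M : Set G) * N = (N : Set G) * M := by
      apply Set.Subset.antisymm
      · rintro x ⟨mm, hm, nn, hn, rfl⟩
        have hnK : nn ∈ K := hN.1 hn
        have hmem : nn⁻¹ * mm * nn ∈ M := by
          rw [← hM.2.2 nn hnK]
          exact mem_conjS.2 ⟨mm, hm, rfl⟩
        exact ⟨nn, hn, nn⁻¹ * mm * nn, hmem, by group⟩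
      · rintro x ⟨nn, hn, mm, hm, rfl⟩
        have hnK : nn ∈ K := hN.1 hn
        have hmem : nn * mm * nn⁻¹ ∈ M := by
          rw [← hM.2.2 nn⁻¹ (inv_mem hnK)]
          exact mem_conjS.2 ⟨mm, hm, by group⟩
        exact ⟨nn * mm * nn⁻¹, hmem, nn, hn, by group⟩
    have hsup : M ⊔ N ∈ 𝒮 := by
      refine ⟨sup_le hM.1 hN.1, ?_, ?_⟩
      · exact sup_pgroup_of_perm hM.2.1 hN.2.1 hperm
      · intro r hr
        rw [conjS_sup, hM.2.2 r hr, hN.2.2 r hr]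
    have heq := hMmax _ hsup (le_sup_left : id M ≤ id (M ⊔ N))
    exact le_sup_right.trans (le_of_eq heq.symm)
  have hqel : ∀ x ∈ K, (∃ k, orderOf x = q ^ k) → x ∈ M := by
    rintro x hxK ⟨k, hk⟩
    rcases eq_or_ne k 0 with rfl | hk0
    · have hx1 : x = 1 := by rwa [pow_zero, orderOf_eq_one_iff] at hk
      rw [hx1]; exact one_mem M
    set H := Subgroup.zpowers x with hH
    have hcyc : IsCyclic ↥H := isCyclic_zpowers x
    have hcard : Nat.card ↥H = q ^ k := by rw [hH, Nat.card_zpowers, hk]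
    have hpp : IsPrimePow (Nat.card ↥H) := by
      rw [hcard]; exact ⟨q, k, hq.out.prime, Nat.pos_of_ne_zero hk0, rfl⟩
    have hRCP := h H hcyc hpp
    have hHp : IsPGroup q ↥H := IsPGroup.of_card hcard
    have hpair : ∀ a ∈ K, ∀ b ∈ K,
        (conjS a H : Set G) * conjS b H = (conjS b H : Set G) * conjS a H :=
      fun a ha b hb => pairwise_perm hRCP ha hb
    have hjoin : ∀ S : Finset G, (↑S ⊆ (K : Set G)) →
        IsPGroup q ↥(⨆ s ∈ S, conjS s H) ∧ ∀ r ∈ K,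
          ((⨆ s ∈ S, conjS s H : Subgroup G) : Set G) * conjS r H
            = (conjS r H : Set G) * ((⨆ s ∈ S, conjS s H : Subgroup G) : Set G) := by
      intro S
      induction S using Finset.induction_on with
      | empty =>
        intro _
        have hbot' : (⨆ s ∈ (∅ : Finset G), conjS s H : Subgroup G) = ⊥ := by simp
        constructor
        · rw [hbot']; exact IsPGroup.of_bot
        · intro r hr
          rw [hbot']
          have h1 : ((⊥ : Subgroup G) : Set G) = (1 : Set G) := by
            rw [Subgroup.coe_bot]; rfl
          rw [h1, one_mul, mul_one]
      | @insert a S' ha hIH =>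
        intro hsub
        have haK : a ∈ K := hsub (Finset.mem_insert_self a S')
        have hsub' : ↑S' ⊆ (K : Set G) := fun y hy => hsub (Finset.mem_insert_of_mem hy)
        obtain ⟨ihp, ihperm⟩ := hIH hsub'
        set J := (⨆ s ∈ S', conjS s H : Subgroup G) with hJ
        have hins : (⨆ s ∈ insert a S', conjS s H : Subgroup G) = conjS a H ⊔ J :=
          Finset.iSup_insert a S' _
        have hpermJa : (conjS a H : Set G) * J = (J : Set G) * conjS a H := (ihperm a haK).symm
        have hcoe : ((conjS a H ⊔ J : Subgroup G) : Set G) = (conjS a H : Set G) * J :=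
          coe_sup_of_perm hpermJa
        constructor
        · rw [hins]
          exact sup_pgroup_of_perm (conjS_pgroup hHp a) ihp hpermJa
        · intro r hr
          rw [hins, hcoe, mul_assoc, ihperm r hr, ← mul_assoc, hpair a haK r hr, mul_assoc]
    set SK : Finset G := (Set.toFinite (K : Set G)).toFinset with hSK
    have hmemSK : ∀ y, y ∈ SK ↔ y ∈ K := by
      intro y; rw [hSK, Set.Finite.mem_toFinset]; rfl
    set N := (⨆ s ∈ SK, conjS s H : Subgroup G) with hN
    have hNK : N ≤ K := by
      refine iSup_le fun s => iSup_le fun hs => ?_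
      exact conjS_le (Subgroup.zpowers_le.2 hxK) ((hmemSK s).1 hs)
    have hNinv : ∀ r ∈ K, conjS r N = N := by
      have hle : ∀ r ∈ K, conjS r N ≤ N := by
        intro r hr
        have hmapN : conjS r N = ⨆ s ∈ SK, conjS r (conjS s H) := by
          rw [hN]
          show Subgroup.map _ _ = _
          rw [Subgroup.map_iSup]
          exact iSup_congr fun s => Subgroup.map_iSup _ _
        rw [hmapN]
        refine iSup_le fun s => iSup_le fun hs => ?_
        rw [conjS_conjS]
        have hsr : s * r ∈ SK := (hmemSK _).2 (mul_mem ((hmemSK s).1 hs) hr)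
        exact le_iSup_of_le (s * r) (le_iSup_of_le hsr le_rfl)
      intro r hr
      refine le_antisymm (hle r hr) ?_
      have h2 := hle r⁻¹ (inv_mem hr)
      have h3 : conjS r (conjS r⁻¹ N) ≤ conjS r N := Subgroup.map_mono h2
      rwa [conjS_conjS, inv_mul_cancel, conjS_one] at h3
    have hNp : IsPGroup q ↥N :=
      (hjoin SK (fun y hy => SetLike.mem_coe.2 ((hmemSK y).1 hy))).1
    have hxN : x ∈ N := by
      have h1K : (1 : G) ∈ SK := (hmemSK 1).2 (one_mem K)
      have hle : H ≤ N := by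
        have h4 : conjS 1 H ≤ N := le_iSup_of_le (1 : G) (le_iSup_of_le h1K le_rfl)
        rwa [conjS_one] at h4
      exact hle (Subgroup.mem_zpowers x)
    exact habsorb N ⟨hNK, hNp, hNinv⟩ hxN
  set M' := M.subgroupOf K with hM'
  have hQM : (Q : Subgroup ↥K) ≤ M' := by
    intro g hg
    obtain ⟨k, hk⟩ := Q.2 ⟨g, hg⟩
    have hord : ((g : G)) ^ (q ^ k) = 1 := by
      have hcast := congrArg (fun z : ↥(Q : Subgroup ↥K) => ((z : ↥K) : G)) hk
      simpa using hcast
    have hex : ∃ j, orderOf (g : G) = q ^ j := by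
      obtain ⟨j, -, hj⟩ := (Nat.dvd_prime_pow hq.out).1 (orderOf_dvd_of_pow_eq_one hord)
      exact ⟨j, hj⟩
    exact Subgroup.mem_subgroupOf.2 (hqel (g : G) g.2 hex)
  have hM'p : IsPGroup q ↥M' := by
    intro g
    obtain ⟨k, hk⟩ := hM.2.1 ⟨((g : ↥K) : G), Subgroup.mem_subgroupOf.1 g.2⟩
    refine ⟨k, ?_⟩
    have hg1 : (((g : ↥K) : G)) ^ (q ^ k) = 1 := by
      have hcast := congrArg (fun z : ↥M => (z : G)) hk
      simpa using hcast
    apply Subtype.ext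
    apply Subtype.ext
    push_cast
    exact hg1
  have hMQ : M' = ↑Q := Q.3 hM'p hQM
  rw [← hMQ]
  constructor
  intro n hn k
  have hn' : ((n : ↥K) : G) ∈ M := Subgroup.mem_subgroupOf.1 hn
  apply Subgroup.mem_subgroupOf.2
  have hkK : ((k : G)) ∈ K := k.2
  have hconj : (k : G) * n * (k : G)⁻¹ ∈ conjS ((k : G))⁻¹ M :=
    mem_conjS.2 ⟨(n : G), hn', by group⟩
  rw [hM.2.2 ((k : G))⁻¹ (inv_mem hkK)] at hconj
  show ((k * n * k⁻¹ : ↥K) : G) ∈ M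
  push_cast
  exact hconj

end AuxRCP


section AuxSocle

variable {H : Type*} {K : Type*} [Group H] [Group K]

lemma normal_map_equiv (e : H ≃* K) {N : Subgroup H} (hN : N.Normal) :
    (N.map e.toMonoidHom).Normal := by
  constructor
  intro n hn g
  obtain ⟨m, hm, rfl⟩ := Subgroup.mem_map.1 hn
  refine Subgroup.mem_map.2 ⟨e.symm g * m * (e.symm g)⁻¹, hN.conj_mem m hm _, ?_⟩
  simp [map_mul]

lemma map_equiv_symm_map (e : H ≃* K) (N : Subgroup H) :
    (N.map e.toMonoidHom).map e.symm.toMonoidHom = N := by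
  rw [Subgroup.map_map]
  have he : (e.symm.toMonoidHom.comp e.toMonoidHom) = MonoidHom.id H := by
    ext x; simp
  rw [he, Subgroup.map_id]

lemma isMinimalNormal_map_equiv (e : H ≃* K) {N : Subgroup H} (hN : IsMinimalNormal N) :
    IsMinimalNormal (N.map e.toMonoidHom) := by
  obtain ⟨hnorm, hbot, hmin⟩ := hN
  refine ⟨normal_map_equiv e hnorm, ?_, ?_⟩
  · intro hcon
    apply hbot
    have h2 := congrArg (Subgroup.map e.symm.toMonoidHom) hcon
    rwa [map_equiv_symm_map, Subgroup.map_bot] at h2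
  · intro L hL hle
    have hL' : (L.map e.symm.toMonoidHom).Normal := normal_map_equiv e.symm hL
    have hle' : L.map e.symm.toMonoidHom ≤ N := by
      have := Subgroup.map_mono (f := e.symm.toMonoidHom) hle
      rwa [map_equiv_symm_map] at this
    have hLL : (L.map e.symm.toMonoidHom).map e.toMonoidHom = L := by
      have := map_equiv_symm_map e.symm L
      rwa [MulEquiv.symm_symm] at this
    rcases hmin _ hL' hle' with hb | hn
    · left; rw [← hLL, hb, Subgroup.map_bot]
    · right; rw [← hLL, hn]

lemma socle'_map_equiv (e : H ≃* K) : (socle' H).map e.toMonoidHom = socle' K := by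
  unfold socle'
  apply le_antisymm
  · rw [sSup_eq_iSup, Subgroup.map_iSup]
    refine iSup_le fun N => ?_
    rw [Subgroup.map_iSup]
    exact iSup_le fun hN => le_sSup (isMinimalNormal_map_equiv e hN)
  · refine sSup_le fun M hM => ?_
    have hMM : (M.map e.symm.toMonoidHom).map e.toMonoidHom = M := by
      have := map_equiv_symm_map e.symm M
      rwa [MulEquiv.symm_symm] at this
    rw [← hMM]
    exact Subgroup.map_mono (le_sSup (isMinimalNormal_map_equiv e.symm hM))

end AuxSocle

section AuxFStar

variable (G : Type*) [Group G]

lemma centralizer_fitting_normal : (Subgroup.centralizer ((Fitting G : Subgroup G) : Set G)).Normal := by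
  constructor
  intro n hn g
  rw [Subgroup.mem_centralizer_iff] at hn ⊢
  intro t ht
  have ht' : g⁻¹ * t * g ∈ Fitting G := by
    have := (Fitting_normal G).conj_mem t ht g⁻¹
    rwa [inv_inv] at this
  have hcomm := hn (g⁻¹ * t * g) ht'
  calc t * (g * n * g⁻¹) = g * ((g⁻¹ * t * g) * n) * g⁻¹ := by group
    _ = g * (n * (g⁻¹ * t * g)) * g⁻¹ := by rw [hcomm]
    _ = (g * n * g⁻¹) * t := by group

lemma FStar_normal : (FStar G).Normal := by
  haveI hC := centralizer_fitting_normal G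
  haveI hCF : (Subgroup.centralizer ((Fitting G : Subgroup G) : Set G) ⊔ Fitting G).Normal :=
    Subgroup.sup_normal _ _
  haveI hS : ((Subgroup.centralizer ((Fitting G : Subgroup G) : Set G) ⊔ Fitting G).map
      (QuotientGroup.mk' (Fitting G))).Normal :=
    hCF.map _ (QuotientGroup.mk'_surjective _)
  set S : Subgroup (G ⧸ Fitting G) :=
    (Subgroup.centralizer ((Fitting G : Subgroup G) : Set G) ⊔ Fitting G).map
      (QuotientGroup.mk' (Fitting G)) with hSdef
  have hsoc : (Subgroup.map S.subtype (socle' ↥S)).Normal := by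
    constructor
    intro x hx g
    obtain ⟨z, hz, rfl⟩ := Subgroup.mem_map.1 hx
    have heq : g * (S.subtype z) * g⁻¹ = S.subtype ((MulAut.conjNormal g : MulAut ↥S) z) := by
      simp [MulAut.conjNormal_apply]
    rw [heq]
    refine Subgroup.mem_map.2 ⟨(MulAut.conjNormal g : MulAut ↥S) z, ?_, rfl⟩
    have hsocinv := socle'_map_equiv (MulAut.conjNormal g : MulAut ↥S)
    rw [← hsocinv]
    exact Subgroup.mem_map.2 ⟨z, hz, rfl⟩
  exact hsoc.comap _

lemma Fitting_le_FStar : Fitting G ≤ FStar G := by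
  intro g hg
  have h1 : QuotientGroup.mk' (Fitting G) g = 1 := by
    rw [QuotientGroup.mk'_apply, QuotientGroup.eq_one_iff]
    exact hg
  have : g ∈ Subgroup.comap (QuotientGroup.mk' (Fitting G))
      (Subgroup.map
        ((Subgroup.centralizer ((Fitting G : Subgroup G) : Set G) ⊔ Fitting G).map
            (QuotientGroup.mk' (Fitting G))).subtype
        (socle' ↥((Subgroup.centralizer ((Fitting G : Subgroup G) : Set G) ⊔ Fitting G).map
            (QuotientGroup.mk' (Fitting G))))) := by
    rw [Subgroup.mem_comap, h1]
    exact one_mem _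
  exact this

lemma centralizer_fitting_le [Finite G] (hEq : FStar G = Fitting G) :
    Subgroup.centralizer ((Fitting G : Subgroup G) : Set G) ≤ Fitting G := by
  intro g hg
  by_contra hgF
  set F := Fitting G with hF
  set S : Subgroup (G ⧸ F) :=
    (Subgroup.centralizer ((F : Subgroup G) : Set G) ⊔ F).map (QuotientGroup.mk' F) with hSdef
  have hgS : (QuotientGroup.mk' F g) ∈ S :=
    Subgroup.mem_map.2 ⟨g, (le_sup_left :
      Subgroup.centralizer ((F : Subgroup G) : Set G) ≤ _) hg, rfl⟩
  have hg1 : (QuotientGroup.mk' F g) ≠ 1 := by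
    rw [QuotientGroup.mk'_apply, Ne, QuotientGroup.eq_one_iff]
    exact hgF
  haveI : Finite (Subgroup ↥S) :=
    Finite.of_injective (fun J => (J : Set ↥S)) SetLike.coe_injective
  -- S is a nontrivial finite group, so it has a minimal normal subgroup
  set 𝒩 : Set (Subgroup ↥S) := {N | N.Normal ∧ N ≠ ⊥} with h𝒩
  have htop : (⊤ : Subgroup ↥S) ∈ 𝒩 := by
    refine ⟨inferInstance, ?_⟩
    intro hcon
    have : (⟨QuotientGroup.mk' F g, hgS⟩ : ↥S) ∈ (⊤ : Subgroup ↥S) := trivial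
    rw [hcon, Subgroup.mem_bot] at this
    apply hg1
    exact congrArg Subtype.val this
  obtain ⟨N, hN, hNmin⟩ :=
    Set.Finite.exists_minimalFor (fun N : Subgroup ↥S => Nat.card N) 𝒩 (Set.toFinite 𝒩)
      ⟨⊤, htop⟩
  replace hNmin : ∀ a' ∈ 𝒩, Nat.card a' ≤ Nat.card N → Nat.card N = Nat.card a' :=
    fun a' ha' hle => le_antisymm (hNmin ha' hle) hle
  have hNminimal : IsMinimalNormal N := by
    refine ⟨hN.1, hN.2, ?_⟩
    intro L hL hle
    rcases eq_or_ne L ⊥ with hb | hb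
    · exact Or.inl hb
    · right
      have hcard := hNmin L ⟨hL, hb⟩ (Subgroup.card_le_of_le hle)
      exact Subgroup.eq_of_le_of_card_ge hle (le_of_eq hcard)
  have hNle : N ≤ socle' ↥S := le_sSup hNminimal
  obtain ⟨n, hnN, hn1⟩ : ∃ n : ↥S, n ∈ N ∧ n ≠ 1 := by
    by_contra hcon
    push_neg at hcon
    exact hN.2 ((Subgroup.eq_bot_iff_forall N).2 hcon)
  have hw : (n : G ⧸ F) ∈ Subgroup.map S.subtype (socle' ↥S) :=
    Subgroup.mem_map.2 ⟨n, hNle hnN, rfl⟩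
  obtain ⟨u, hu⟩ := QuotientGroup.mk'_surjective F (n : G ⧸ F)
  have huF : u ∈ FStar G := by
    have : u ∈ Subgroup.comap (QuotientGroup.mk' F) (Subgroup.map S.subtype (socle' ↥S)) := by
      rw [Subgroup.mem_comap, hu]
      exact hw
    exact this
  rw [hEq] at huF
  have : QuotientGroup.mk' F u = 1 := by
    rw [QuotientGroup.mk'_apply, QuotientGroup.eq_one_iff]
    exact huF
  rw [hu] at this
  apply hn1
  exact Subtype.ext this

end AuxFStar

theorem nilpotent_of_cyclic_primary_fstar_conjugate_permutable
    (G : Type*) [Group G] [Finite G]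
    (h : ∀ H : Subgroup G, IsCyclic ↥H → IsPrimePow (Nat.card ↥H) →
      IsRCP (FStar G : Set G) H) :
    Group.IsNilpotent G := by
  classical
  have hKnil : Group.IsNilpotent ↥(FStar G) := nilpotent_of_RCP (FStar G) h
  have hNn : (FStar G).Normal := FStar_normal G
  have hFK : Fitting G ≤ FStar G := Fitting_le_FStar G
  have hKF : FStar G ≤ Fitting G := le_sSup ⟨hNn, hKnil⟩
  have hEq : FStar G = Fitting G := le_antisymm hKF hFK
  have hFnil : Group.IsNilpotent ↥(Fitting G) := hEq ▸ hKnil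
  have hCle := centralizer_fitting_le G hEq
  -- elements of coprime prime power order, one of them in the Fitting subgroup, commute
  have comm4 : ∀ (a b : ℕ), a.Prime → b.Prime → a ≠ b → ∀ x f : G,
      (∃ k, orderOf x = a ^ k) → f ∈ Fitting G → (∃ k, orderOf f = b ^ k) → x * f = f * x := by
    intro a b hpa hpb hab x f hx hf hfb
    haveI : Fact a.Prime := ⟨hpa⟩
    obtain ⟨k, hk⟩ := hx
    rcases eq_or_ne k 0 with rfl | hk0
    · have hx1 : x = 1 := by rwa [pow_zero, orderOf_eq_one_iff] at hk
      rw [hx1, one_mul, mul_one]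
    set H := Subgroup.zpowers x with hH
    have hcard : Nat.card ↥H = a ^ k := by rw [hH, Nat.card_zpowers, hk]
    have hRCP := h H (isCyclic_zpowers x)
      (by rw [hcard]; exact ⟨a, k, hpa.prime, Nat.pos_of_ne_zero hk0, rfl⟩)
    have hperm := hRCP f (SetLike.mem_coe.2 (hFK hf))
    have hHp : IsPGroup a ↥H := IsPGroup.of_card hcard
    have hPp : IsPGroup a ↥(H ⊔ conjS f H) :=
      sup_pgroup_of_perm hHp (conjS_pgroup hHp f) hperm
    set c := x⁻¹ * (f⁻¹ * x * f) with hc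
    have hcP : c ∈ H ⊔ conjS f H := by
      refine mul_mem (inv_mem ((le_sup_left : H ≤ _) (Subgroup.mem_zpowers x))) ?_
      exact (le_sup_right : conjS f H ≤ _) (mem_conjS.2 ⟨x, Subgroup.mem_zpowers x, rfl⟩)
    obtain ⟨j, hj⟩ := hPp ⟨c, hcP⟩
    have hcpow : c ^ (a ^ j) = 1 := by
      have hcast := congrArg (fun z : ↥(H ⊔ conjS f H) => (z : G)) hj
      simpa using hcast
    have hcda : orderOf c ∣ a ^ j := orderOf_dvd_of_pow_eq_one hcpow
    have hu : x⁻¹ * f⁻¹ * x ∈ Fitting G := by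
      have hconj := (Fitting_normal G).conj_mem f⁻¹ (inv_mem hf) x⁻¹
      rwa [inv_inv] at hconj
    have hub : ∃ i, orderOf (x⁻¹ * f⁻¹ * x) = b ^ i := by
      obtain ⟨i, hi⟩ := hfb
      exact ⟨i, by rw [orderOf_conj, orderOf_inv, hi]⟩
    have hcb : ∃ i, orderOf c = b ^ i := by
      have hcF : c = (x⁻¹ * f⁻¹ * x) * f := by rw [hc]; group
      set u : ↥(Fitting G) := ⟨x⁻¹ * f⁻¹ * x, hu⟩ with hudef
      set v : ↥(Fitting G) := ⟨f, hf⟩ with hvdef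
      have h7 : orderOf (x⁻¹ * f⁻¹ * x) = orderOf u := (Subgroup.orderOf_mk _ _).symm
      have h8 : orderOf f = orderOf v := (Subgroup.orderOf_mk _ _).symm
      have h9 : orderOf ((x⁻¹ * f⁻¹ * x) * f) = orderOf (u * v) := by
        rw [← Subgroup.orderOf_coe (u * v)]
        congr 1
      have hordu : ∃ i, orderOf u = b ^ i := by
        obtain ⟨i, hi⟩ := hub; exact ⟨i, by rw [← h7, hi]⟩
      have hordv : ∃ i, orderOf v = b ^ i := by
        obtain ⟨i, hi⟩ := hfb; exact ⟨i, by rw [← h8, hi]⟩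
      obtain ⟨i, hi⟩ := primary_mul_of_nilpotent hFnil hpb hordu hordv
      exact ⟨i, by rw [hcF, h9, hi]⟩
    obtain ⟨i, hi⟩ := hcb
    have hc1 : c = 1 := by
      rcases eq_or_ne i 0 with rfl | hi0
      · rwa [pow_zero, orderOf_eq_one_iff] at hi
      · exfalso
        rw [hi] at hcda
        have hbdvd : b ∣ a ^ j := dvd_trans (dvd_pow_self b hi0) hcda
        have hba : b ∣ a := Nat.Prime.dvd_of_dvd_pow hpb hbdvd
        exact hab ((Nat.prime_dvd_prime_iff_eq hpb hpa).1 hba).symm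
    have h6 : x⁻¹ * (f⁻¹ * x * f) = 1 := hc1
    have h5 : x = f⁻¹ * x * f := inv_mul_eq_one.1 h6
    calc x * f = f * (f⁻¹ * x * f) := by group
      _ = f * x := by rw [← h5]
  -- every element of prime power order lies in the Fitting subgroup
  have main4 : ∀ (p : ℕ), p.Prime → ∀ x : G, (∃ k, orderOf x = p ^ k) → x ∈ Fitting G := by
    intro q hq x hxq
    haveI : Fact q.Prime := ⟨hq⟩
    set T : Set G := {t : G | t ∈ Fitting G ∧ ∃ r, r.Prime ∧ r ≠ q ∧ ∃ k, orderOf t = r ^ k}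
      with hT
    set X := Subgroup.centralizer T with hX
    have hXnormal : X.Normal := by
      constructor
      intro n hn g
      rw [hX, Subgroup.mem_centralizer_iff] at hn ⊢
      intro t ht
      have ht' : g⁻¹ * t * g ∈ T := by
        obtain ⟨htF, r, hr, hrq, k, hk⟩ := ht
        refine ⟨?_, r, hr, hrq, k, ?_⟩
        · have hconj := (Fitting_normal G).conj_mem t htF g⁻¹
          rwa [inv_inv] at hconj
        · rw [orderOf_conj, hk]
      have hcomm := hn (g⁻¹ * t * g) ht'
      calc t * (g * n * g⁻¹) = g * ((g⁻¹ * t * g) * n) * g⁻¹ := by group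
        _ = g * (n * (g⁻¹ * t * g)) * g⁻¹ := by rw [hcomm]
        _ = (g * n * g⁻¹) * t := by group
    have hqX : ∀ y : G, (∃ k, orderOf y = q ^ k) → y ∈ X := by
      intro y hy
      rw [hX, Subgroup.mem_centralizer_iff]
      rintro t ⟨htF, r, hr, hrq, hk⟩
      exact (comm4 q r hq hr (Ne.symm hrq) y t hy htF hk).symm
    have hxX : x ∈ X := hqX x hxq
    have hq'c : ∀ b : G, b ∈ X → ¬ q ∣ orderOf b → b ∈ Subgroup.centralizer (X : Set G) := by
      intro b hb hbq
      have hbcl := mem_closure_primary b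
      have hgen : {y : G | y ∈ Subgroup.zpowers b ∧ ∃ p k, Nat.Prime p ∧ orderOf y = p ^ k} ⊆
          (Subgroup.centralizer (X : Set G) : Set G) := by
        rintro y ⟨hyz, r, k, hr, hyk⟩
        rcases eq_or_ne k 0 with rfl | hk0
        · have hy1 : y = 1 := by rwa [pow_zero, orderOf_eq_one_iff] at hyk
          rw [hy1]; exact one_mem _
        have hrq : r ≠ q := by
          intro hreq
          apply hbq
          rw [← hreq]
          have hdy : r ∣ orderOf y := by rw [hyk]; exact dvd_pow_self r hk0
          exact hdy.trans (orderOf_dvd_of_mem_zpowers hyz)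
        have hyX : y ∈ X := (Subgroup.zpowers_le.2 hb) hyz
        have hyCF : y ∈ Subgroup.centralizer ((Fitting G : Subgroup G) : Set G) := by
          rw [Subgroup.mem_centralizer_iff]
          intro f hf
          have hfcl := mem_closure_primary f
          have hfc : f ∈ Subgroup.centralizer ({y} : Set G) := by
            have hsub2 : {z : G | z ∈ Subgroup.zpowers f ∧ ∃ p k, Nat.Prime p ∧ orderOf z = p ^ k}
                ⊆ (Subgroup.centralizer ({y} : Set G) : Set G) := by
              rintro w ⟨hwz, s, i, hs, hwk⟩
              rw [SetLike.mem_coe, Subgroup.mem_centralizer_iff]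
              intro y' hy'
              rw [Set.mem_singleton_iff] at hy'
              rw [hy']
              have hwF : w ∈ Fitting G := (Subgroup.zpowers_le.2 hf) hwz
              rcases eq_or_ne s q with rfl | hsq
              · exact comm4 r s hr hs hrq y w ⟨k, hyk⟩ hwF ⟨i, hwk⟩
              · have hwT : w ∈ T := ⟨hwF, s, hs, hsq, i, hwk⟩
                exact (Subgroup.mem_centralizer_iff.1 hyX w hwT).symm
            exact (Subgroup.closure_le _).2 hsub2 hfcl
          exact (Subgroup.mem_centralizer_iff.1 hfc y (Set.mem_singleton y)).symm
        have hyF : y ∈ Fitting G := hCle hyCF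
        have hyT : y ∈ T := ⟨hyF, r, hr, hrq, k, hyk⟩
        rw [SetLike.mem_coe, Subgroup.mem_centralizer_iff]
        intro z hz
        exact (Subgroup.mem_centralizer_iff.1 hz y hyT).symm
      exact (Subgroup.closure_le _).2 hgen hbcl
    have hXnil : Group.IsNilpotent ↥X := by
      apply of_quotient_center_nilpotent
      have hpq : IsPGroup q (↥X ⧸ Subgroup.center ↥X) := by
        intro g0
        refine QuotientGroup.induction_on g0 ?_
        intro z
        set e := (orderOf (z : G)).factorization q with he
        refine ⟨e, ?_⟩
        have hmkpow : ((QuotientGroup.mk z : ↥X ⧸ Subgroup.center ↥X)) ^ (q ^ e)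
            = QuotientGroup.mk (z ^ (q ^ e)) := by
          rw [← QuotientGroup.mk'_apply, ← map_pow, QuotientGroup.mk'_apply]
        rw [hmkpow, QuotientGroup.eq_one_iff]
        have hb : ¬ q ∣ orderOf ((z : G) ^ (q ^ e)) := by
          rw [orderOf_pow]
          have hgcd : Nat.gcd (orderOf (z : G)) (q ^ e) = q ^ e :=
            Nat.gcd_eq_right (Nat.ordProj_dvd _ _)
          rw [hgcd]
          exact Nat.not_dvd_ordCompl hq (orderOf_pos (z : G)).ne'
        have hbX : (z : G) ^ (q ^ e) ∈ X := pow_mem z.2 _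
        have hbc := hq'c _ hbX hb
        rw [Subgroup.mem_center_iff]
        intro w
        apply Subtype.ext
        push_cast
        exact Subgroup.mem_centralizer_iff.1 hbc (w : G) w.2
      exact hpq.isNilpotent
    exact (le_sSup ⟨hXnormal, hXnil⟩ : X ≤ Fitting G) hxX
  have htop : ∀ g : G, g ∈ Fitting G := by
    intro g
    have hcl := mem_closure_primary g
    have hgen : {y : G | y ∈ Subgroup.zpowers g ∧ ∃ p k, Nat.Prime p ∧ orderOf y = p ^ k} ⊆
        ((Fitting G : Subgroup G) : Set G) := by
      rintro y ⟨-, p, k, hp, hyk⟩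
      exact main4 p hp y ⟨k, hyk⟩
    exact (Subgroup.closure_le _).2 hgen hcl
  haveI : Group.IsNilpotent ↥(Fitting G) := hFnil
  have hsurj : Function.Surjective (Fitting G).subtype := fun g => ⟨⟨g, htop g⟩, rfl⟩
  exact nilpotent_of_surjective _ hsurj
end

section
/- A finite group G is supersoluble if and only if G = A·B, where A and B are supersoluble F(G)-conjugate-permutable subgroups of G, and the commutator subgroup G' of G is nilpotent. -/
open scoped Pointwise
open scoped commutatorElement

section Helpers
open Subgroup

variable {G : Type*} [Group G]

theorem isSupersoluble_of_subsingleton (G : Type*) [Group G] [Subsingleton G] :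
    IsSupersoluble G := by
  refine ⟨0, fun _ => ⊥, monotone_const, rfl, Subsingleton.elim _ _, fun _ => inferInstance,
    fun i => i.elim0⟩

theorem IsSupersoluble.of_surjective {G₂ : Type*} [Group G₂] (f : G →* G₂)
    (hf : Function.Surjective f) (h : IsSupersoluble G) : IsSupersoluble G₂ := by
  obtain ⟨n, s, hmono, h0, hlast, hnorm, hcyc⟩ := h
  refine ⟨n, fun i => (s i).map f, fun i j hij => Subgroup.map_mono (hmono hij), ?_, ?_,
    fun i => (hnorm i).map f hf, fun i => ?_⟩
  · show (s 0).map f = ⊥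
    rw [h0, Subgroup.map_bot]
  · show (s (Fin.last n)).map f = ⊤
    rw [hlast, Subgroup.map_top_of_surjective f hf]
  · obtain ⟨g, hg⟩ := hcyc i
    exact ⟨f g, by
      calc (s i.succ).map f ≤ (s i.castSucc ⊔ zpowers g).map f := Subgroup.map_mono hg
      _ = (s i.castSucc).map f ⊔ zpowers (f g) := by rw [Subgroup.map_sup, f.map_zpowers]⟩

/-- subgroup of a cyclic `zpowers g` is cyclic, with generator inside. -/
theorem exists_zpowers_eq_of_le_zpowers {W : Subgroup G} {g : G} (hW : W ≤ Subgroup.zpowers g) :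
    ∃ w, w ∈ W ∧ W = Subgroup.zpowers w := by
  by_cases hbot : W = ⊥
  · exact ⟨1, by simp [hbot], by simp [hbot, Subgroup.zpowers_one_eq_bot]⟩
  · -- exists positive power in W
    have hex : ∃ m : ℕ, 0 < m ∧ g ^ (m : ℤ) ∈ W := by
      obtain ⟨a, ha⟩ := (Subgroup.ne_bot_iff_exists_ne_one.mp hbot)
      obtain ⟨w, hw⟩ := a
      have hw1 : w ≠ 1 := by simpa using ha
      obtain ⟨k, hk⟩ := hW hw
      change g ^ k = w at hk
      rcases lt_trichotomy k 0 with hk0 | hk0 | hk0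
      · exact ⟨(-k).toNat, by omega, by
          rw [Int.toNat_of_nonneg (by omega)]
          simpa [hk] using W.inv_mem hw⟩
      · exact absurd (by simp [← hk, hk0]) hw1
      · exact ⟨k.toNat, by omega, by rw [Int.toNat_of_nonneg (by omega)]; simpa [hk] using hw⟩
    classical
    set d := Nat.find hex with hd
    obtain ⟨hm0, hmW⟩ : 0 < d ∧ g ^ (d : ℤ) ∈ W := Nat.find_spec hex
    have hmin : ∀ m : ℕ, m < d → ¬(0 < m ∧ g ^ (m:ℤ) ∈ W) := fun m hm => Nat.find_min hex hm
    clear_value d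
    clear hd
    refine ⟨g ^ (d : ℤ), hmW, le_antisymm ?_ ?_⟩
    · intro w hw
      obtain ⟨k, hk⟩ := hW hw
      change g ^ k = w at hk
      refine ⟨k / d, ?_⟩
      have hr : g ^ (k % d) ∈ W := by
        have : (g ^ (d:ℤ)) ^ (-(k / d)) * w ∈ W := W.mul_mem (W.zpow_mem hmW _) hw
        rw [← hk, ← zpow_mul, ← zpow_add] at this
        convert this using 2
        rw [Int.emod_def]; ring
      have hrd : k % d = 0 := by
        by_contra hne
        have h0le : 0 ≤ k % d := Int.emod_nonneg k (by exact_mod_cast hm0.ne')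
        have hlt : k % d < d := Int.emod_lt_of_pos k (by exact_mod_cast hm0)
        have : (k % d).toNat < d ∧ 0 < (k % d).toNat ∧ g ^ (((k % d).toNat : ℕ) : ℤ) ∈ W := by
          refine ⟨by omega, by omega, by rw [Int.toNat_of_nonneg h0le]; exact hr⟩
        exact absurd this.2.2 (fun hmem => (hmin _ this.1) ⟨by omega, hmem⟩)
      show (g ^ (d:ℤ)) ^ (k / (d:ℤ)) = w
      rw [← zpow_mul, ← hk]
      congr 1
      exact Int.mul_ediv_cancel' (Int.dvd_of_emod_eq_zero hrd)
    · rw [Subgroup.zpowers_le]; exact hmW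
end Helpers
section Helpers2
open Subgroup
variable {G : Type*} [Group G]

theorem isSupersoluble_of_quotient_zpowers {N : Subgroup G} (hN : N.Normal) (x : G)
    (hx : N = Subgroup.zpowers x)
    (hq : IsSupersoluble (G ⧸ N)) : IsSupersoluble G := by
  obtain ⟨n, s, hmono, h0, hlast, hnorm, hcyc⟩ := hq
  set mk : G →* G ⧸ N := QuotientGroup.mk' N with hmk
  have hsurj : Function.Surjective mk := QuotientGroup.mk'_surjective N
  have hker : mk.ker = N := QuotientGroup.ker_mk' N
  refine ⟨n + 1, fun i => if h : (i : ℕ) = 0 then ⊥ else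
    Subgroup.comap mk (s ⟨(i : ℕ) - 1, by omega⟩), ?_, ?_, ?_, ?_, ?_⟩
  · intro i j hij
    by_cases hi : (i : ℕ) = 0
    · simp [hi]
    · have hj : (j : ℕ) ≠ 0 := by have := (Fin.le_def.mp hij); omega
      simp only [dif_neg hi, dif_neg hj]
      exact Subgroup.comap_mono (hmono (by
        simp only [Fin.mk_le_mk]
        have := (Fin.le_def.mp hij); omega))
  · simp
  · have : ((Fin.last (n + 1) : Fin (n + 2)) : ℕ) = n + 1 := rfl
    simp only [this]
    rw [dif_neg (by omega)]
    have : (⟨n + 1 - 1, by omega⟩ : Fin (n + 1)) = Fin.last n := by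
      apply Fin.ext; simp
    rw [this, hlast, Subgroup.comap_top]
  · intro i
    by_cases hi : (i : ℕ) = 0
    · simp only [dif_pos hi]; infer_instance
    · simp only [dif_neg hi]; exact (hnorm _).comap mk
  · intro i
    by_cases hi : (i : ℕ) = 0
    · refine ⟨x, ?_⟩
      have hic : ((i.castSucc : Fin (n + 2)) : ℕ) = (i : ℕ) := rfl
      have his : ((i.succ : Fin (n + 2)) : ℕ) = (i : ℕ) + 1 := rfl
      simp only [hic, his, dif_pos hi, dif_neg (by omega : ¬((i:ℕ) + 1 = 0))]
      have : (⟨(i : ℕ) + 1 - 1, by omega⟩ : Fin (n + 1)) = ⟨0, by omega⟩ := by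
        apply Fin.ext; show (i : ℕ) + 1 - 1 = 0; omega
      rw [this]
      have h00 : (⟨0, by omega⟩ : Fin (n+1)) = 0 := rfl
      rw [h00, h0]
      intro y hy
      have : y ∈ mk.ker := by simpa [hker] using hy
      rw [hker, hx] at this
      exact Subgroup.mem_sup_right this
    · -- i ≥ 1
      set j : Fin n := ⟨(i : ℕ) - 1, by omega⟩ with hj
      obtain ⟨gq, hgq⟩ := hcyc j
      obtain ⟨g, rfl⟩ := hsurj gq
      refine ⟨g, ?_⟩
      have hic : ((i.castSucc : Fin (n + 2)) : ℕ) = (i : ℕ) := rfl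
      have his : ((i.succ : Fin (n + 2)) : ℕ) = (i : ℕ) + 1 := rfl
      simp only [hic, his, dif_neg hi, dif_neg (by omega : ¬((i:ℕ) + 1 = 0))]
      have e1 : (⟨(i : ℕ) + 1 - 1, by omega⟩ : Fin (n + 1)) = j.succ := by
        apply Fin.ext; simp [hj]; omega
      have e2 : (⟨(i : ℕ) - 1, by omega⟩ : Fin (n + 1)) = j.castSucc := by
        apply Fin.ext; simp [hj]
      rw [e1, e2]
      have hsub : comap mk (s j.castSucc ⊔ zpowers (mk g)) ≤
          comap mk (s j.castSucc) ⊔ zpowers g := by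
        rw [← Subgroup.comap_sup_eq mk _ _ hsurj]
        refine sup_le le_sup_left ?_
        intro y hy
        obtain ⟨k, hk⟩ := hy
        change (mk g) ^ k = mk y at hk
        have hmem : y * (g ^ k)⁻¹ ∈ N := by
          rw [← hker]
          have : mk (y * (g ^ k)⁻¹) = 1 := by
            rw [map_mul, map_inv, map_zpow, hk]
            group
          exact this
        have h1 : y * (g ^ k)⁻¹ ∈ comap mk (s j.castSucc) := by
          have hNle : N ≤ comap mk (s j.castSucc) := by
            intro z hz
            have hz1 : mk z = 1 := MonoidHom.mem_ker.mp (by rw [hker]; exact hz)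
            simp only [Subgroup.mem_comap, hz1]
            exact (s j.castSucc).one_mem
          exact hNle hmem
        have hyk : y = (y * (g ^ k)⁻¹) * g ^ k := by group
        rw [hyk]
        exact Subgroup.mul_mem _ (Subgroup.mem_sup_left h1)
          (Subgroup.mem_sup_right (Subgroup.zpow_mem _ (Subgroup.mem_zpowers g) k))
      exact fun y hy => hsub (Subgroup.mem_comap.mpr (hgq hy))
end Helpers2
section Helpers3
open Subgroup

private theorem conj_zpow_inv {Q : Type*} [Group Q] (a b : Q) (j : ℤ) :
    a⁻¹ * b ^ j * a = (a⁻¹ * b * a) ^ j := by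
  have := conj_zpow (i := j) (a := a⁻¹) (b := b)
  simpa using this.symm

theorem commutator_le_centralizer_of_le_zpowers {Q : Type*} [Group Q] {W : Subgroup Q}
    (hWn : W.Normal) {g : Q} (hW : W ≤ Subgroup.zpowers g) :
    commutator Q ≤ Subgroup.centralizer (W : Set Q) := by
  obtain ⟨w0, hw0W, hw0⟩ := exists_zpowers_eq_of_le_zpowers hW
  have hpow : ∀ q : Q, ∃ k : ℤ, ∀ w ∈ W, q⁻¹ * w * q = w ^ k := by
    intro q
    have hmem : q⁻¹ * w0 * q ∈ W := by
      simpa using hWn.conj_mem w0 hw0W q⁻¹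
    rw [hw0] at hmem
    obtain ⟨k, hk⟩ := hmem
    change w0 ^ k = q⁻¹ * w0 * q at hk
    refine ⟨k, fun w hw => ?_⟩
    rw [hw0] at hw
    obtain ⟨j, hj⟩ := hw
    change w0 ^ j = w at hj
    subst hj
    calc q⁻¹ * w0 ^ j * q = (q⁻¹ * w0 * q) ^ j := conj_zpow_inv q w0 j
      _ = (w0 ^ k) ^ j := by rw [hk]
      _ = (w0 ^ j) ^ k := by rw [← zpow_mul, ← zpow_mul, mul_comm]
  rw [_root_.commutator_def, Subgroup.commutator_le]
  intro q _ r _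
  rw [Subgroup.mem_centralizer_iff]
  intro w hw
  obtain ⟨kq, hkq⟩ := hpow q
  obtain ⟨kr, hkr⟩ := hpow r
  have hconj : ∀ u : Q, u⁻¹ * w * u ∈ W := fun u => by simpa using hWn.conj_mem w hw u⁻¹
  have h1 : (q * r)⁻¹ * w * (q * r) = w ^ (kq * kr) := by
    have : (q * r)⁻¹ * w * (q * r) = r⁻¹ * (q⁻¹ * w * q) * r := by group
    rw [this, hkq w hw, conj_zpow_inv, hkr w hw, ← zpow_mul, Int.mul_comm]
  have h2 : (r * q)⁻¹ * w * (r * q) = w ^ (kq * kr) := by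
    have : (r * q)⁻¹ * w * (r * q) = q⁻¹ * (r⁻¹ * w * r) * q := by group
    rw [this, hkr w hw, conj_zpow_inv, hkq w hw, ← zpow_mul, mul_comm]
  have h12 : (q * r)⁻¹ * w * (q * r) = (r * q)⁻¹ * w * (r * q) := by rw [h1, h2]
  have : w * ⁅q, r⁆ = (q * r) * ((q*r)⁻¹ * w * (q*r)) * (r * q)⁻¹ := by
    rw [commutatorElement_def]; group
  rw [this, h12]
  rw [commutatorElement_def]; group
end Helpers3
section Helpers4
open Subgroup

/-- iterated commutator with a fixed subgroup -/
def itc {G : Type*} [Group G] (R : Subgroup G) : ℕ → Subgroup G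
  | 0 => R
  | (k+1) => ⁅itc R k, R⁆

theorem key_commutator_step {G : Type*} [Group G] {X Y : Subgroup G} (hX : X.Normal)
    (hY : Y.Normal) (g : G) (hXY : Y ≤ X ⊔ Subgroup.zpowers g) :
    ⁅commutator G, Y⁆ ≤ X := by
  letI := hX
  set mk : G →* G ⧸ X := QuotientGroup.mk' X with hmk
  have hsurj : Function.Surjective mk := QuotientGroup.mk'_surjective X
  set W : Subgroup (G ⧸ X) := Y.map mk with hW
  have hWn : W.Normal := hY.map mk hsurj
  have hWle : W ≤ Subgroup.zpowers (mk g) := by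
    rw [hW]
    calc Y.map mk ≤ (X ⊔ Subgroup.zpowers g).map mk := Subgroup.map_mono hXY
      _ = X.map mk ⊔ Subgroup.zpowers (mk g) := by
          rw [Subgroup.map_sup, MonoidHom.map_zpowers]
      _ ≤ Subgroup.zpowers (mk g) := by
          refine sup_le ?_ le_rfl
          intro y hy
          obtain ⟨z, hz, rfl⟩ := hy
          have : mk z = 1 := MonoidHom.mem_ker.mp (by rw [QuotientGroup.ker_mk']; exact hz)
          rw [this]; exact Subgroup.one_mem _
  have hcent := commutator_le_centralizer_of_le_zpowers hWn hWle
  have hbot : ⁅commutator (G ⧸ X), W⁆ = ⊥ :=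
    Subgroup.commutator_eq_bot_iff_le_centralizer.mpr hcent
  have hmapcomm : (commutator G).map mk = commutator (G ⧸ X) := by
    rw [_root_.commutator_def, Subgroup.map_commutator,
      Subgroup.map_top_of_surjective mk hsurj, _root_.commutator_def]
  have hmapbot : (⁅commutator G, Y⁆).map mk = ⊥ := by
    rw [Subgroup.map_commutator, hmapcomm, ← hW, hbot]
  have hle : ⁅commutator G, Y⁆ ≤ mk.ker := by
    intro z hz
    rw [MonoidHom.mem_ker]
    have hmem : mk z ∈ (⁅commutator G, Y⁆).map mk := ⟨z, hz, rfl⟩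
    rw [hmapbot] at hmem
    simpa using hmem
  rwa [QuotientGroup.ker_mk'] at hle

theorem isNilpotent_commutator_of_isSupersoluble {G : Type*} [Group G]
    (h : IsSupersoluble G) : Group.IsNilpotent ↥(commutator G) := by
  obtain ⟨n, s, hmono, h0, hlast, hnorm, hcyc⟩ := h
  have key : ∀ i : Fin n, ⁅commutator G, s i.succ⁆ ≤ s i.castSucc := by
    intro i
    obtain ⟨g, hg⟩ := hcyc i
    exact key_commutator_step (hnorm _) (hnorm _) g hg
  have claim : ∀ k, k ≤ n →
      itc (commutator G) k ≤ s ⟨n - k, Nat.lt_succ_of_le (Nat.sub_le n k)⟩ := by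
    intro k
    induction k with
    | zero =>
      intro _
      have he : (⟨n - 0, Nat.lt_succ_of_le (Nat.sub_le n 0)⟩ : Fin (n+1)) = Fin.last n :=
        Fin.ext (by simp)
      rw [he, hlast]
      exact le_top
    | succ k ih =>
      intro hk1
      have hk : k ≤ n := by omega
      have ihk := ih hk
      show ⁅itc (commutator G) k, commutator G⁆ ≤ _
      set i : Fin n := ⟨n - (k + 1), by omega⟩ with hi
      have hisucc : (i.succ : Fin (n + 1)) = ⟨n - k, Nat.lt_succ_of_le (Nat.sub_le n k)⟩ := by
        apply Fin.ext
        show (n - (k+1)) + 1 = n - k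
        omega
      have hics : (i.castSucc : Fin (n + 1))
          = ⟨n - (k+1), Nat.lt_succ_of_le (Nat.sub_le n (k+1))⟩ := by
        apply Fin.ext; rfl
      calc ⁅itc (commutator G) k, commutator G⁆
          ≤ ⁅s ⟨n - k, Nat.lt_succ_of_le (Nat.sub_le n k)⟩, commutator G⁆ :=
            Subgroup.commutator_mono ihk le_rfl
        _ = ⁅commutator G, s i.succ⁆ := by rw [Subgroup.commutator_comm, hisucc]
        _ ≤ s i.castSucc := key i
        _ = _ := by rw [hics]
  have hLamn : itc (commutator G) n = ⊥ := by
    have hcl := claim n le_rfl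
    have he : (⟨n - n, Nat.lt_succ_of_le (Nat.sub_le n n)⟩ : Fin (n+1)) = 0 :=
      Fin.ext (by simp)
    rw [he, h0] at hcl
    exact le_bot_iff.mp hcl
  have corr : ∀ k,
      ((⊤ : Subgroup ↥(commutator G)).lowerCentralSeries k).map (commutator G).subtype
        = itc (commutator G) k := by
    intro k
    induction k with
    | zero =>
      show (⊤ : Subgroup ↥(commutator G)).map _ = _
      rw [← MonoidHom.range_eq_map, Subgroup.range_subtype]
      rfl
    | succ k ih =>
      have hdef : (⊤ : Subgroup ↥(commutator G)).lowerCentralSeries (k + 1) =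
          ⁅(⊤ : Subgroup ↥(commutator G)).lowerCentralSeries k, ⊤⁆ := rfl
      rw [hdef, Subgroup.map_commutator, ih]
      show _ = ⁅itc (commutator G) k, commutator G⁆
      congr 1
      rw [← MonoidHom.range_eq_map, Subgroup.range_subtype]
  rw [_root_.nilpotent_iff_lowerCentralSeries]
  refine ⟨n, ?_⟩
  have hc := corr n
  rw [hLamn] at hc
  exact (Subgroup.map_eq_bot_iff_of_injective _ (Subgroup.subtype_injective _)).mp hc
end Helpers4
section Helpers5
open Subgroup

variable {G : Type*} [Group G]

theorem exists_boundary {f : ℕ → Prop} {m : ℕ} (h0 : ¬ f 0) (hm : f m) :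
    ∃ k, ¬ f k ∧ f (k + 1) := by
  induction m with
  | zero => exact absurd hm h0
  | succ m ih =>
    by_cases h : f m
    · exact ih h
    · exact ⟨m, h, hm⟩

theorem conjS_map {G₂ : Type*} [Group G₂] (f : G →* G₂) (x : G) (A : Subgroup G) :
    conjS (f x) (A.map f) = (conjS x A).map f := by
  unfold conjS
  rw [Subgroup.map_map, Subgroup.map_map]
  congr 1
  ext a
  simp [MulAut.conj_apply, mul_assoc]

theorem itc_map {G₂ : Type*} [Group G₂] (f : G →* G₂) (R : Subgroup G) (k : ℕ) :
    itc (R.map f) k = (itc R k).map f := by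
  induction k with
  | zero => rfl
  | succ k ih =>
    show ⁅itc (R.map f) k, R.map f⁆ = (⁅itc R k, R⁆).map f
    rw [ih, Subgroup.map_commutator]

/-- the product set of two permuting subgroups is closed under the group operations -/
theorem permProd_one_mem {H K : Subgroup G} : (1 : G) ∈ (H : Set G) * (K : Set G) :=
  ⟨1, H.one_mem, 1, K.one_mem, by simp⟩

theorem permProd_mul_mem {H K : Subgroup G}
    (hcom : (H : Set G) * (K : Set G) = (K : Set G) * (H : Set G)) {a b : G}
    (ha : a ∈ (H : Set G) * (K : Set G)) (hb : b ∈ (H : Set G) * (K : Set G)) :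
    a * b ∈ (H : Set G) * (K : Set G) := by
  obtain ⟨h1, hh1, k1, hk1, rfl⟩ := ha
  obtain ⟨h2, hh2, k2, hk2, rfl⟩ := hb
  have : k1 * h2 ∈ (K : Set G) * (H : Set G) := ⟨k1, hk1, h2, hh2, rfl⟩
  rw [← hcom] at this
  obtain ⟨h3, hh3, k3, hk3, he⟩ := this
  change h3 * k3 = k1 * h2 at he
  have : h1 * k1 * (h2 * k2) = (h1 * h3) * (k3 * k2) := by
    have : h1 * (k1 * h2) * k2 = h1 * (h3 * k3) * k2 := by rw [he]
    calc h1 * k1 * (h2 * k2) = h1 * (k1 * h2) * k2 := by group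
      _ = h1 * (h3 * k3) * k2 := by rw [he]
      _ = (h1 * h3) * (k3 * k2) := by group
  rw [this]
  exact ⟨h1 * h3, H.mul_mem hh1 hh3, k3 * k2, K.mul_mem hk3 hk2, rfl⟩

theorem permProd_inv_mem {H K : Subgroup G}
    (hcom : (H : Set G) * (K : Set G) = (K : Set G) * (H : Set G)) {a : G}
    (ha : a ∈ (H : Set G) * (K : Set G)) : a⁻¹ ∈ (H : Set G) * (K : Set G) := by
  obtain ⟨h1, hh1, k1, hk1, rfl⟩ := ha
  have : (h1 * k1)⁻¹ ∈ (K : Set G) * (H : Set G) :=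
    ⟨k1⁻¹, K.inv_mem hk1, h1⁻¹, H.inv_mem hh1, by group⟩
  rwa [← hcom] at this
end Helpers5
section Helpers6
open Subgroup

theorem mem_of_rcp_fixedfree {G : Type*} [Group G] [Finite G] {N A : Subgroup G} {a x : G}
    (hNn : N.Normal)
    (hfix : ∀ n ∈ N, a * n = n * a → n = 1)
    (ha : a ∈ A)
    (hx : x ∈ N)
    (hperm : (A : Set G) * (conjS x A : Set G) = (conjS x A : Set G) * (A : Set G)) :
    x ∈ A := by
  classical
  -- the twisted map on N
  have hmem : ∀ n : ↥N, (a⁻¹ * (n : G)⁻¹ * a) * (n : G) ∈ N := by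
    intro n
    refine N.mul_mem ?_ n.2
    simpa using hNn.conj_mem _ (N.inv_mem n.2) a⁻¹
  set φ : ↥N → ↥N := fun n => ⟨(a⁻¹ * (n : G)⁻¹ * a) * (n : G), hmem n⟩ with hφ
  have hφval : ∀ n : ↥N, ((φ n : ↥N) : G) = (a⁻¹ * (n : G)⁻¹ * a) * (n : G) := fun n => rfl
  have hinj : Function.Injective φ := by
    intro n m h
    have h' : (a⁻¹ * (n : G)⁻¹ * a) * (n : G) = (a⁻¹ * (m : G)⁻¹ * a) * (m : G) :=
      congrArg (fun z : ↥N => (z : G)) h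
    set nn := (n : G); set mm := (m : G)
    have h2 : nn⁻¹ * a * nn = mm⁻¹ * a * mm := by
      calc nn⁻¹ * a * nn = a * ((a⁻¹ * nn⁻¹ * a) * nn) := by group
        _ = a * ((a⁻¹ * mm⁻¹ * a) * mm) := by rw [h']
        _ = mm⁻¹ * a * mm := by group
    have key : a * (mm * nn⁻¹) = (mm * nn⁻¹) * a := by
      calc a * (mm * nn⁻¹) = mm * (mm⁻¹ * a * mm) * nn⁻¹ := by group
        _ = mm * (nn⁻¹ * a * nn) * nn⁻¹ := by rw [h2]
        _ = (mm * nn⁻¹) * a := by group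
    have hmemN : mm * nn⁻¹ ∈ N := N.mul_mem m.2 (N.inv_mem n.2)
    have := hfix _ hmemN key
    have : mm = nn := by
      have h4 : mm * nn⁻¹ * nn = 1 * nn := by rw [this]
      simpa using h4
    exact (Subtype.ext this).symm
  -- iterate identity
  obtain ⟨i, j, hij, hfe⟩ := Finite.exists_ne_map_eq_of_infinite (fun t : ℕ => φ^[t])
  wlog hlt : i < j generalizing i j
  · exact this j i hij.symm hfe.symm (by omega)
  have hiter : φ^[j - i] = id := by
    funext z
    have : φ^[i] (φ^[j - i] z) = φ^[i] (id z) := by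
      rw [← Function.iterate_add_apply]
      have : i + (j - i) = j := by omega
      rw [this, id]
      exact (congrFun hfe.symm z)
    exact hinj.iterate i this
  -- the product set
  set S : Set G := (A : Set G) * (conjS x A : Set G) with hS
  have haS : a ∈ S := ⟨a, ha, 1, (conjS x A).one_mem, mul_one a⟩
  have hmulS : ∀ {u v : G}, u ∈ S → v ∈ S → u * v ∈ S := fun hu hv =>
    permProd_mul_mem hperm hu hv
  have hinvS : ∀ {u : G}, u ∈ S → u⁻¹ ∈ S := fun hu => permProd_inv_mem hperm hu
  have hstable : ∀ z : ↥N, (z : G) ∈ S → ((φ z : ↥N) : G) ∈ S := by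
    intro z hz
    rw [hφval]
    exact hmulS (hmulS (hmulS (hinvS haS) (hinvS hz)) haS) hz
  have hiterS : ∀ t (z : ↥N), (z : G) ∈ S → ((φ^[t] z : ↥N) : G) ∈ S := by
    intro t
    induction t with
    | zero => intro z hz; simpa using hz
    | succ t ih =>
      intro z hz
      rw [Function.iterate_succ_apply]
      exact ih _ (hstable z hz)
  -- x ∈ S
  set u : ↥N := ⟨x, hx⟩ with hu
  have hyS : ((φ u : ↥N) : G) ∈ S := by
    rw [hφval]
    refine ⟨a⁻¹, A.inv_mem ha, x⁻¹ * a * x, ?_, by show a⁻¹ * (x⁻¹ * a * x) = a⁻¹ * x⁻¹ * a * x; group⟩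
    show x⁻¹ * a * x ∈ (conjS x A : Set G)
    refine ⟨a, ha, ?_⟩
    show MulAut.conj x⁻¹ a = x⁻¹ * a * x
    simp [MulAut.conj_apply]
  have hxS : x ∈ S := by
    have hji : j - i = (j - i - 1) + 1 := by omega
    have := hiterS (j - i - 1) (φ u) hyS
    rw [← Function.iterate_succ_apply, Nat.succ_eq_add_one, ← hji, hiter] at this
    simpa using this
  -- conclude x ∈ A
  obtain ⟨a₁, ha₁, w, hw, he⟩ := hxS
  obtain ⟨a₂, ha₂, rfl⟩ := hw
  change a₁ * (MulAut.conj x⁻¹ a₂) = x at he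
  rw [MulAut.conj_apply, inv_inv] at he
  have e1 : (a₁ * x⁻¹ * a₂) * x = 1 * x := by
    rw [one_mul]
    calc (a₁ * x⁻¹ * a₂) * x = a₁ * (x⁻¹ * a₂ * x) := by group
      _ = x := he
  have e2 := mul_right_cancel e1
  have e3 : x⁻¹ = a₁⁻¹ * a₂⁻¹ := by
    calc x⁻¹ = a₁⁻¹ * (a₁ * x⁻¹ * a₂) * a₂⁻¹ := by group
      _ = a₁⁻¹ * 1 * a₂⁻¹ := by rw [e2]
      _ = a₁⁻¹ * a₂⁻¹ := by group
  have e4 : x = a₂ * a₁ := by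
    rw [← inv_inv x, e3]
    simp [mul_inv_rev]
  rw [e4]
  exact A.mul_mem ha₂ ha₁
end Helpers6
section Helpers7
open Subgroup

theorem map_le_zpowers_quot {H : Type*} [Group H] (X Y : Subgroup H) [X.Normal] (g : H)
    (h : Y ≤ X ⊔ Subgroup.zpowers g) :
    Y.map (QuotientGroup.mk' X) ≤ Subgroup.zpowers ((QuotientGroup.mk' X) g) := by
  set mk := QuotientGroup.mk' X
  calc Y.map mk ≤ (X ⊔ Subgroup.zpowers g).map mk := Subgroup.map_mono h
    _ = X.map mk ⊔ Subgroup.zpowers (mk g) := by rw [Subgroup.map_sup, MonoidHom.map_zpowers]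
    _ ≤ Subgroup.zpowers (mk g) := by
        refine sup_le ?_ le_rfl
        intro y hy
        obtain ⟨z, hz, rfl⟩ := hy
        have : mk z = 1 := MonoidHom.mem_ker.mp (by rw [QuotientGroup.ker_mk']; exact hz)
        rw [this]; exact Subgroup.one_mem _

theorem exists_invariant_zpowers {G : Type*} [Group G] {A N : Subgroup G}
    (hss : IsSupersoluble ↥A) (hNA : N ≤ A) (hNn : N.Normal) (hNne : N ≠ ⊥) :
    ∃ v : G, v ≠ 1 ∧ v ∈ N ∧ ∀ a ∈ A, a⁻¹ * v * a ∈ Subgroup.zpowers v := by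
  obtain ⟨n, s, hmono, h0, hlast, hnorm, hcyc⟩ := hss
  set N' : Subgroup ↥A := N.subgroupOf A with hN'
  have hN'n : N'.Normal := hNn.subgroupOf A
  have hN'ne : N' ≠ ⊥ := by
    obtain ⟨b, hb⟩ := Subgroup.ne_bot_iff_exists_ne_one.mp hNne
    intro hbot
    have hmem : (⟨(b : G), hNA b.2⟩ : ↥A) ∈ N' := by
      rw [hN', Subgroup.mem_subgroupOf]
      exact b.2
    rw [hbot, Subgroup.mem_bot] at hmem
    apply hb
    ext
    simpa using congrArg (fun z : ↥A => (z : G)) hmem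
  set T : ℕ → Subgroup ↥A := fun k => s ⟨min k n, by omega⟩ ⊓ N' with hT
  have hT0 : ¬ (T 0 ≠ ⊥) := by
    rw [not_ne_iff]
    show s ⟨min 0 n, by omega⟩ ⊓ N' = ⊥
    have : (⟨min 0 n, by omega⟩ : Fin (n+1)) = 0 := Fin.ext (by simp)
    rw [this, h0, bot_inf_eq]
  have hTn : T n ≠ ⊥ := by
    show s ⟨min n n, by omega⟩ ⊓ N' ≠ ⊥
    have : (⟨min n n, by omega⟩ : Fin (n+1)) = Fin.last n := Fin.ext (by simp)
    rw [this, hlast, top_inf_eq]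
    exact hN'ne
  obtain ⟨k, hk0, hk1⟩ := exists_boundary (f := fun k => T k ≠ ⊥) hT0 hTn
  rw [not_ne_iff] at hk0
  have hkn : k < n := by
    by_contra hge
    have he : T (k + 1) = T k := by
      show s ⟨min (k+1) n, by omega⟩ ⊓ N' = s ⟨min k n, by omega⟩ ⊓ N'
      congr 2
      apply Fin.ext
      show min (k+1) n = min k n
      omega
    rw [he, hk0] at hk1
    exact hk1 rfl
  set i : Fin n := ⟨k, hkn⟩ with hi
  have hics : (⟨min k n, by omega⟩ : Fin (n+1)) = i.castSucc := Fin.ext (by simp [hi]; omega)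
  have hisucc : (⟨min (k+1) n, by omega⟩ : Fin (n+1)) = i.succ := Fin.ext (by simp [hi]; omega)
  have hTk : s i.castSucc ⊓ N' = ⊥ := by
    rw [← hics]
    exact hk0
  set P : Subgroup ↥A := s i.succ ⊓ N' with hP
  have hPne : P ≠ ⊥ := by
    rw [hP, ← hisucc]
    exact hk1
  have hPinf : P ⊓ s i.castSucc = ⊥ := by
    rw [eq_bot_iff]
    intro q hq
    have h1 : q ∈ s i.castSucc ⊓ N' := ⟨hq.2, hq.1.2⟩
    rw [hTk] at h1
    exact h1
  letI := hnorm i.castSucc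
  set mk := QuotientGroup.mk' (s i.castSucc) with hmkdef
  obtain ⟨g, hg⟩ := hcyc i
  have himP : P.map mk ≤ Subgroup.zpowers (mk g) :=
    map_le_zpowers_quot _ _ g ((inf_le_left : P ≤ s i.succ).trans hg)
  obtain ⟨wq, hwqmem, hwqeq⟩ := exists_zpowers_eq_of_le_zpowers himP
  obtain ⟨v', hv'P, rfl⟩ := hwqmem
  have hPeq : P = Subgroup.zpowers v' := by
    refine le_antisymm ?_ (Subgroup.zpowers_le.mpr hv'P)
    intro p hp
    have : mk p ∈ P.map mk := ⟨p, hp, rfl⟩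
    rw [hwqeq] at this
    obtain ⟨z, hz⟩ := this
    change (mk v') ^ z = mk p at hz
    have hker : p * (v' ^ z)⁻¹ ∈ s i.castSucc := by
      have : mk (p * (v' ^ z)⁻¹) = 1 := by
        rw [map_mul, map_inv, map_zpow, hz]
        group
      rw [← QuotientGroup.ker_mk' (s i.castSucc)]
      exact this
    have hmemP : p * (v' ^ z)⁻¹ ∈ P := P.mul_mem hp (P.inv_mem (P.zpow_mem hv'P z))
    have : p * (v' ^ z)⁻¹ ∈ P ⊓ s i.castSucc := ⟨hmemP, hker⟩
    rw [hPinf, Subgroup.mem_bot] at this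
    have : p = v' ^ z := by
      have h5 : p * (v' ^ z)⁻¹ * (v' ^ z) = 1 * (v' ^ z) := by rw [this]
      simpa using h5
    rw [this]
    exact Subgroup.zpow_mem _ (Subgroup.mem_zpowers v') z
  have hv'ne : v' ≠ 1 := by
    intro h1
    rw [h1, Subgroup.zpowers_one_eq_bot] at hPeq
    exact hPne hPeq
  refine ⟨((v' : ↥A) : G), ?_, ?_, ?_⟩
  · simpa using hv'ne
  · have : v' ∈ N' := hv'P.2
    rwa [hN', Subgroup.mem_subgroupOf] at this
  · intro a haA
    letI := hnorm i.succ
    letI := hN'n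
    haveI hPn : P.Normal := Subgroup.normal_inf_normal _ _
    set aa : ↥A := ⟨a, haA⟩ with haa
    have : aa⁻¹ * v' * (aa⁻¹)⁻¹ ∈ P := hPn.conj_mem v' hv'P aa⁻¹
    rw [inv_inv, hPeq] at this
    obtain ⟨z, hz⟩ := this
    change v' ^ z = aa⁻¹ * v' * aa at hz
    refine ⟨z, ?_⟩
    show ((v' : ↥A) : G) ^ z = a⁻¹ * ((v' : ↥A) : G) * a
    have := congrArg (fun t : ↥A => (t : G)) hz
    simpa using this
end Helpers7
section Helpers8
open Subgroup

theorem commutator_map_surj {G G₂ : Type*} [Group G] [Group G₂] (f : G →* G₂)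
    (hf : Function.Surjective f) : (commutator G).map f = commutator G₂ := by
  rw [_root_.commutator_def, Subgroup.map_commutator,
    Subgroup.map_top_of_surjective f hf, _root_.commutator_def]

universe u

theorem step_quotient (n : ℕ)
    (ih : ∀ (G : Type u) [Group G] [Finite G] (R A B : Subgroup G),
      Nat.card G ≤ n → R.Normal → commutator G ≤ R → (∃ m, itc R m = ⊥) →
      (A : Set G) * (B : Set G) = Set.univ → IsSupersoluble ↥A → IsSupersoluble ↥B →
      IsRCP (R : Set G) A → IsRCP (R : Set G) B → IsSupersoluble G)
    (G : Type u) [Group G] [Finite G] (R A B : Subgroup G)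
    (hcard : Nat.card G ≤ n + 1) (hRn : R.Normal) (hGR : commutator G ≤ R)
    (hitc : ∃ m, itc R m = ⊥) (hAB : (A : Set G) * (B : Set G) = Set.univ)
    (hA : IsSupersoluble ↥A) (hB : IsSupersoluble ↥B)
    (hArcp : IsRCP (R : Set G) A) (hBrcp : IsRCP (R : Set G) B)
    (x : G) (hx1 : x ≠ 1) (hxn : (Subgroup.zpowers x).Normal) :
    IsSupersoluble G := by
  letI := hxn
  set mk : G →* G ⧸ Subgroup.zpowers x := QuotientGroup.mk' _ with hmkdef
  have hsurj : Function.Surjective mk := QuotientGroup.mk'_surjective _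
  refine isSupersoluble_of_quotient_zpowers hxn x rfl ?_
  refine ih (G ⧸ Subgroup.zpowers x) (R.map mk) (A.map mk) (B.map mk) ?_ (hRn.map mk hsurj)
    ?_ ?_ ?_ ?_ ?_ ?_ ?_
  · -- cardinality
    haveI : Nontrivial ↥(Subgroup.zpowers x) :=
      ⟨⟨⟨x, Subgroup.mem_zpowers x⟩, ⟨1, Subgroup.one_mem _⟩, by simpa [Subtype.ext_iff] using hx1⟩⟩
    have h2 : 2 ≤ Nat.card ↥(Subgroup.zpowers x) := Finite.one_lt_card
    have he := Subgroup.card_eq_card_quotient_mul_card_subgroup (Subgroup.zpowers x)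
    have hq1 : 1 ≤ Nat.card (G ⧸ Subgroup.zpowers x) := Nat.card_pos
    have hmul : Nat.card (G ⧸ Subgroup.zpowers x) * 2
        ≤ Nat.card (G ⧸ Subgroup.zpowers x) * Nat.card ↥(Subgroup.zpowers x) :=
      Nat.mul_le_mul_left _ h2
    omega
  · rw [← commutator_map_surj mk hsurj]
    exact Subgroup.map_mono hGR
  · obtain ⟨m, hm⟩ := hitc
    exact ⟨m, by rw [itc_map, hm, Subgroup.map_bot]⟩
  · rw [Set.eq_univ_iff_forall]
    intro q
    obtain ⟨g, rfl⟩ := hsurj q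
    have : g ∈ (A : Set G) * (B : Set G) := by rw [hAB]; trivial
    obtain ⟨a, ha, b, hb, rfl⟩ := this
    exact ⟨mk a, ⟨a, ha, rfl⟩, mk b, ⟨b, hb, rfl⟩, (map_mul mk a b).symm⟩
  · exact hA.of_surjective (mk.subgroupMap A) (MonoidHom.subgroupMap_surjective mk A)
  · exact hB.of_surjective (mk.subgroupMap B) (MonoidHom.subgroupMap_surjective mk B)
  · intro xq hxq
    obtain ⟨r, hr, rfl⟩ := hxq
    rw [conjS_map mk r A, Subgroup.coe_map, Subgroup.coe_map, ← Set.image_mul,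
      hArcp r hr, Set.image_mul]
  · intro xq hxq
    obtain ⟨r, hr, rfl⟩ := hxq
    rw [conjS_map mk r B, Subgroup.coe_map, Subgroup.coe_map, ← Set.image_mul,
      hBrcp r hr, Set.image_mul]
end Helpers8
section Helpers9
open Subgroup

/-- iterated commutator of `X` against `R` -/
def itcF {G : Type*} [Group G] (X R : Subgroup G) : ℕ → Subgroup G
  | 0 => X
  | (k+1) => ⁅itcF X R k, R⁆

universe u

theorem aux_supersoluble : ∀ (n : ℕ) (G : Type u) [Group G] [Finite G] (R A B : Subgroup G),
    Nat.card G ≤ n → R.Normal → commutator G ≤ R → (∃ m, itc R m = ⊥) →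
    (A : Set G) * (B : Set G) = Set.univ → IsSupersoluble ↥A → IsSupersoluble ↥B →
    IsRCP (R : Set G) A → IsRCP (R : Set G) B → IsSupersoluble G := by
  intro n
  induction n with
  | zero =>
    intro G _ _ R A B hcard _ _ _ _ _ _ _ _
    have : 0 < Nat.card G := Nat.card_pos
    omega
  | succ n ih =>
    intro G _ _ R A B hcard hRn hGR hitc hAB hA hB hArcp hBrcp
    by_cases htriv : Subsingleton G
    · exact isSupersoluble_of_subsingleton G
    suffices hexists : ∃ x : G, x ≠ 1 ∧ (Subgroup.zpowers x).Normal by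
      obtain ⟨x, hx1, hxn⟩ := hexists
      exact step_quotient n ih G R A B hcard hRn hGR hitc hAB hA hB hArcp hBrcp x hx1 hxn
    by_cases hcomm : commutator G = ⊥
    · -- abelian case
      haveI : Nontrivial G := not_subsingleton_iff_nontrivial.mp htriv
      obtain ⟨x, hx⟩ := exists_ne (1 : G)
      refine ⟨x, hx, ⟨fun u hu g => ?_⟩⟩
      have hc : ⁅g, u⁆ = 1 := by
        have : ⁅g, u⁆ ∈ commutator G :=
          Subgroup.commutator_mem_commutator (Subgroup.mem_top g) (Subgroup.mem_top u)
        rwa [hcomm, Subgroup.mem_bot] at this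
      rw [commutatorElement_def] at hc
      have : g * u * g⁻¹ = u := by
        have h4 : g * u * g⁻¹ * u⁻¹ * u = 1 * u := by rw [hc]
        simpa using h4
      rw [this]
      exact hu
    · -- main case
      -- minimal normal subgroup inside the commutator subgroup
      obtain ⟨N, ⟨hNn, hNne, hNle⟩, hNmin'⟩ :=
        (IsWellFounded.wf (r := ((·<·) : Subgroup G → Subgroup G → Prop))).has_min
          {K : Subgroup G | K.Normal ∧ K ≠ ⊥ ∧ K ≤ commutator G}
          ⟨commutator G, inferInstance, hcomm, le_rfl⟩
      have hNmin : ∀ K : Subgroup G, K.Normal → K ≠ ⊥ → K ≤ N → K = N := by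
        intro K h1 h2 h3
        by_contra hne
        exact hNmin' K ⟨h1, h2, h3.trans hNle⟩ (lt_of_le_of_ne h3 hne)
      have hNR : N ≤ R := hNle.trans hGR
      -- N centralizes R
      obtain ⟨m0, hm0⟩ := hitc
      have hDle : ∀ k, itcF N R k ≤ itc R k := by
        intro k
        induction k with
        | zero => exact hNR
        | succ k ihk => exact Subgroup.commutator_mono ihk le_rfl
      have hDnorm : ∀ k, (itcF N R k).Normal := by
        intro k
        induction k with
        | zero => exact hNn
        | succ k ihk =>
          letI := ihk
          exact Subgroup.commutator_normal _ _
      have hDN : ∀ k, itcF N R k ≤ N := by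
        intro k
        induction k with
        | zero => exact le_rfl
        | succ k ihk =>
          letI := hDnorm k
          exact (Subgroup.commutator_le_left _ _).trans ihk
      obtain ⟨k0, hk0, hk1⟩ := exists_boundary (f := fun k => itcF N R k = ⊥)
        hNne (le_bot_iff.mp ((hDle m0).trans_eq hm0))
      have hDeqN : itcF N R k0 = N := hNmin _ (hDnorm k0) hk0 (hDN k0)
      have hNRbot : ⁅N, R⁆ = ⊥ := by
        have : itcF N R (k0 + 1) = ⁅itcF N R k0, R⁆ := rfl
        rw [this, hDeqN] at hk1
        exact hk1
      have hNcent : N ≤ Subgroup.centralizer (R : Set G) :=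
        Subgroup.commutator_eq_bot_iff_le_centralizer.mp hNRbot
      have hNcomm : ∀ nn ∈ N, ∀ m ∈ N, nn * m = m * nn := fun nn hn m hm =>
        Subgroup.mem_centralizer_iff.mp (hNcent hm) nn (hNR hn)
      have hGcomm : ∀ c ∈ commutator G, ∀ nn ∈ N, c * nn = nn * c := fun c hc nn hn =>
        Subgroup.mem_centralizer_iff.mp (hNcent hn) c (hGR hc)
      -- fixed points of a non-centralizing element are trivial
      have hfixfree : ∀ a : G, (∃ n0 ∈ N, a * n0 ≠ n0 * a) →
          ∀ n ∈ N, a * n = n * a → n = 1 := by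
        rintro a ⟨n0, hn0, hn0ne⟩
        set CNa : Subgroup G :=
          { carrier := {n : G | n ∈ N ∧ a * n = n * a},
            one_mem' := ⟨N.one_mem, by simp⟩,
            mul_mem' := by
              rintro u v ⟨huN, hu⟩ ⟨hvN, hv⟩
              refine ⟨N.mul_mem huN hvN, ?_⟩
              calc a * (u * v) = (a * u) * v := by group
                _ = u * (a * v) := by rw [hu]; group
                _ = u * (v * a) := by rw [hv]
                _ = (u * v) * a := by group
            inv_mem' := by
              rintro u ⟨huN, hu⟩
              refine ⟨N.inv_mem huN, ?_⟩
              calc a * u⁻¹ = u⁻¹ * (u * a) * u⁻¹ := by group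
                _ = u⁻¹ * (a * u) * u⁻¹ := by rw [hu]
                _ = u⁻¹ * a := by group } with hCNa
        have hCn : CNa.Normal := by
          constructor
          rintro u ⟨huN, hu⟩ g
          refine ⟨by simpa using hNn.conj_mem u huN g, ?_⟩
          set c : G := a⁻¹ * g⁻¹ * a * g with hc
          have hcmem : c ∈ commutator G := by
            have : (⁅a⁻¹, g⁻¹⁆ : G) ∈ commutator G :=
              Subgroup.commutator_mem_commutator (Subgroup.mem_top _) (Subgroup.mem_top _)
            rwa [show (⁅a⁻¹, g⁻¹⁆ : G) = c by rw [commutatorElement_def, hc]; group] at this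
          have hgag : g⁻¹ * a * g = a * c := by rw [hc]; group
          have hY : (g⁻¹ * a * g) * u = u * (g⁻¹ * a * g) := by
            rw [hgag]
            calc (a * c) * u = a * (c * u) := by group
              _ = a * (u * c) := by rw [hGcomm c hcmem u huN]
              _ = (a * u) * c := by group
              _ = (u * a) * c := by rw [hu]
              _ = u * (a * c) := by group
          calc a * (g * u * g⁻¹) = g * ((g⁻¹ * a * g) * u) * g⁻¹ := by group
            _ = g * (u * (g⁻¹ * a * g)) * g⁻¹ := by rw [hY]
            _ = (g * u * g⁻¹) * a := by group
        intro n hn hcomm_n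
        have hCne : CNa ≠ N := by
          intro he
          exact hn0ne (he ▸ hn0 : n0 ∈ CNa).2
        by_cases hbot : CNa = ⊥
        · have : n ∈ CNa := ⟨hn, hcomm_n⟩
          rwa [hbot, Subgroup.mem_bot] at this
        · exact absurd (hNmin CNa hCn hbot (fun u hu => hu.1)) hCne
      -- scalar action
      have hpowN : ∀ a : G, ∀ k : ℤ, ∀ v : G, v ≠ 1 → v ∈ N → a⁻¹ * v * a = v ^ k →
          ∀ nn ∈ N, a⁻¹ * nn * a = nn ^ k := by
        intro a k v hv1 hvN hvk
        set Ka : Subgroup G :=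
          { carrier := {m : G | m ∈ N ∧ a⁻¹ * m * a = m ^ k},
            one_mem' := ⟨N.one_mem, by simp⟩,
            mul_mem' := by
              rintro u w ⟨huN, hu⟩ ⟨hwN, hw⟩
              refine ⟨N.mul_mem huN hwN, ?_⟩
              have hcom : Commute u w := hNcomm u huN w hwN
              calc a⁻¹ * (u * w) * a = (a⁻¹ * u * a) * (a⁻¹ * w * a) := by group
                _ = u ^ k * w ^ k := by rw [hu, hw]
                _ = (u * w) ^ k := (hcom.mul_zpow k).symm
            inv_mem' := by
              rintro u ⟨huN, hu⟩
              refine ⟨N.inv_mem huN, ?_⟩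
              calc a⁻¹ * u⁻¹ * a = (a⁻¹ * u * a)⁻¹ := by group
                _ = (u ^ k)⁻¹ := by rw [hu]
                _ = u⁻¹ ^ k := by rw [inv_zpow] } with hKa
        have hKan : Ka.Normal := by
          constructor
          rintro u ⟨huN, hu⟩ g
          refine ⟨by simpa using hNn.conj_mem u huN g, ?_⟩
          set c : G := a⁻¹ * g⁻¹ * a * g with hc
          have hcmem : c ∈ commutator G := by
            have : (⁅a⁻¹, g⁻¹⁆ : G) ∈ commutator G :=
              Subgroup.commutator_mem_commutator (Subgroup.mem_top _) (Subgroup.mem_top _)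
            rwa [show (⁅a⁻¹, g⁻¹⁆ : G) = c by rw [commutatorElement_def, hc]; group] at this
          have hgag : g⁻¹ * a * g = a * c := by rw [hc]; group
          have hZ : (g⁻¹ * a * g)⁻¹ * u * (g⁻¹ * a * g) = u ^ k := by
            rw [hgag]
            have hck : c * u ^ k = u ^ k * c := hGcomm c hcmem (u ^ k) (N.zpow_mem huN k)
            calc (a * c)⁻¹ * u * (a * c) = c⁻¹ * (a⁻¹ * u * a) * c := by group
              _ = c⁻¹ * u ^ k * c := by rw [hu]
              _ = c⁻¹ * (c * u ^ k) := by rw [hck]; group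
              _ = u ^ k := by group
          calc a⁻¹ * (g * u * g⁻¹) * a
              = g * ((g⁻¹ * a * g)⁻¹ * u * (g⁻¹ * a * g)) * g⁻¹ := by group
            _ = g * u ^ k * g⁻¹ := by rw [hZ]
            _ = (g * u * g⁻¹) ^ k := conj_zpow.symm
        have hKane : Ka ≠ ⊥ := by
          intro hbot
          have : v ∈ Ka := ⟨hvN, hvk⟩
          rw [hbot, Subgroup.mem_bot] at this
          exact hv1 this
        have hKaN : Ka = N := hNmin Ka hKan hKane (fun u hu => hu.1)
        intro nn hn
        have : nn ∈ Ka := by rw [hKaN]; exact hn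
        exact this.2
      -- invariance of subgroups of N
      have hinv : ∀ (U : Subgroup G), U ≤ N → ∀ (A' : Subgroup G), IsSupersoluble ↥A' →
          IsRCP (R : Set G) A' → ∀ a ∈ A', ∀ u ∈ U, a⁻¹ * u * a ∈ U := by
        intro U hUN A' hA'ss hA'rcp a haA u hu
        by_cases hcent : ∀ nn ∈ N, a * nn = nn * a
        · have : a⁻¹ * u * a = u := by
            have := hcent u (hUN hu)
            calc a⁻¹ * u * a = a⁻¹ * (u * a) := by group
              _ = a⁻¹ * (a * u) := by rw [← this]
              _ = u := by group
          rw [this]; exact hu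
        · push_neg at hcent
          obtain ⟨n0, hn0, hne⟩ := hcent
          have hfix := hfixfree a ⟨n0, hn0, hne⟩
          have hNA' : N ≤ A' := fun y hy =>
            mem_of_rcp_fixedfree hNn hfix haA hy (hA'rcp y (hNR hy))
          obtain ⟨v, hv1, hvN, hvinv⟩ := exists_invariant_zpowers hA'ss hNA' hNn hNne
          obtain ⟨k, hk⟩ := hvinv a haA
          change v ^ k = a⁻¹ * v * a at hk
          have hscal := hpowN a k v hv1 hvN hk.symm
          rw [hscal u (hUN hu)]
          exact U.zpow_mem hu k
      -- conclude
      obtain ⟨y, hy⟩ := Subgroup.ne_bot_iff_exists_ne_one.mp hNne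
      have hx1 : ((y : ↥N) : G) ≠ 1 := by simpa using hy
      set x : G := ((y : ↥N) : G) with hxdef
      have hxN : x ∈ N := y.2
      have hZle : Subgroup.zpowers x ≤ N := Subgroup.zpowers_le.mpr hxN
      refine ⟨x, hx1, ⟨fun u hu g => ?_⟩⟩
      have hgmem : g ∈ (A : Set G) * (B : Set G) := by rw [hAB]; trivial
      obtain ⟨a, haA, b, hbB, rfl⟩ := hgmem
      have h1 : b * u * b⁻¹ ∈ Subgroup.zpowers x := by
        have := hinv (Subgroup.zpowers x) hZle B hB hBrcp b⁻¹ (B.inv_mem hbB) u hu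
        simpa using this
      have h2 : a * (b * u * b⁻¹) * a⁻¹ ∈ Subgroup.zpowers x := by
        have := hinv (Subgroup.zpowers x) hZle A hA hArcp a⁻¹ (A.inv_mem haA) _ h1
        simpa using this
      have he : (a * b) * u * (a * b)⁻¹ = a * (b * u * b⁻¹) * a⁻¹ := by group
      rw [he]
      exact h2
end Helpers9
section Helpers10
open Subgroup

theorem lcs_map_subtype {G : Type*} [Group G] (H : Subgroup G) (k : ℕ) :
    ((⊤ : Subgroup ↥H).lowerCentralSeries k).map H.subtype = itc H k := by
  induction k with
  | zero =>
    show (⊤ : Subgroup ↥H).map _ = _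
    rw [← MonoidHom.range_eq_map, Subgroup.range_subtype]
    rfl
  | succ k ih =>
    have hdef : (⊤ : Subgroup ↥H).lowerCentralSeries (k + 1) = ⁅(⊤ : Subgroup ↥H).lowerCentralSeries k, ⊤⁆ := rfl
    rw [hdef, Subgroup.map_commutator, ih]
    show _ = ⁅itc H k, H⁆
    congr 1
    rw [← MonoidHom.range_eq_map, Subgroup.range_subtype]
end Helpers10
theorem supersoluble_iff_product_of_supersoluble_fitting_cp_nilpotent_commutator
    (G : Type*) [Group G] [Finite G] :
    IsSupersoluble G ↔
      ∃ A B : Subgroup G, (A : Set G) * (B : Set G) = Set.univ ∧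
        IsSupersoluble ↥A ∧ IsSupersoluble ↥B ∧
        IsRCP (Fitting G : Set G) A ∧ IsRCP (Fitting G : Set G) B ∧
        Group.IsNilpotent (commutator G) := by
  constructor
  · intro h
    have htopss : IsSupersoluble ↥(⊤ : Subgroup G) :=
      h.of_surjective Subgroup.topEquiv.symm.toMonoidHom (fun b => ⟨Subgroup.topEquiv b, by ext; simp⟩)
    have hconjtop : ∀ x : G, conjS x (⊤ : Subgroup G) = ⊤ := fun x =>
      Subgroup.map_top_of_surjective _ (MulAut.conj x⁻¹).surjective
    have hrcp : IsRCP ((Fitting G : Subgroup G) : Set G) (⊤ : Subgroup G) := by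
      intro x _
      rw [hconjtop x]
    refine ⟨⊤, ⊤, ?_, htopss, htopss, hrcp, hrcp,
      isNilpotent_commutator_of_isSupersoluble h⟩
    rw [Subgroup.coe_top, Set.univ_mul_univ]
  · rintro ⟨A, B, hAB, hA, hB, hArcp, hBrcp, hnil⟩
    have hle : commutator G ≤ Fitting G :=
      le_sSup (by exact ⟨inferInstance, hnil⟩)
    have hArcp' : IsRCP ((commutator G : Subgroup G) : Set G) A := fun x hx => hArcp x (hle hx)
    have hBrcp' : IsRCP ((commutator G : Subgroup G) : Set G) B := fun x hx => hBrcp x (hle hx)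
    have hitc : ∃ m, itc (commutator G) m = ⊥ := by
      obtain ⟨m, hm⟩ := nilpotent_iff_lowerCentralSeries.mp hnil
      exact ⟨m, by rw [← lcs_map_subtype, hm, Subgroup.map_bot]⟩
    exact aux_supersoluble (Nat.card G) G (commutator G) A B le_rfl inferInstance le_rfl hitc
      hAB hA hB hArcp' hBrcp'
end

section
/- For every finite group G, the generalized Fitting subgroup F*(G) is contained in F̃(G). -/
open scoped Pointwise

/-! ### Auxiliary infrastructure -/

open scoped commutatorElement

section Aux1

variable {G : Type*} [Group G]

/-- Membership in a sup when the second subgroup normalizes the first. -/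
lemma mem_sup_of_norm {A B : Subgroup G}
    (h : ∀ b ∈ B, ∀ a ∈ A, b * a * b⁻¹ ∈ A) {x : G} :
    x ∈ A ⊔ B ↔ ∃ a ∈ A, ∃ b ∈ B, a * b = x := by
  constructor
  · intro hx
    let S : Subgroup G :=
      { carrier := (A : Set G) * (B : Set G)
        one_mem' := ⟨1, A.one_mem, 1, B.one_mem, one_mul 1⟩
        mul_mem' := by
          rintro x y ⟨a, ha, b, hb, rfl⟩ ⟨a', ha', b', hb', rfl⟩
          exact ⟨a * (b * a' * b⁻¹), mul_mem ha (h b hb a' ha'), b * b',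
            mul_mem hb hb', by group⟩
        inv_mem' := by
          rintro x ⟨a, ha, b, hb, rfl⟩
          refine ⟨b⁻¹ * a⁻¹ * b, ?_, b⁻¹, inv_mem hb, by group⟩
          have := h b⁻¹ (inv_mem hb) a⁻¹ (inv_mem ha)
          simpa using this }
    have hle : A ⊔ B ≤ S := by
      refine sup_le (fun a ha => ⟨a, ha, 1, B.one_mem, mul_one a⟩)
        (fun b hb => ⟨1, A.one_mem, b, hb, one_mul b⟩)
    obtain ⟨a, ha, b, hb, hab⟩ := hle hx
    exact ⟨a, ha, b, hb, hab⟩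
  · rintro ⟨a, ha, b, hb, rfl⟩
    exact mul_mem (le_sup_left (a := A) (b := B) ha) (le_sup_right (a := A) (b := B) hb)

/-- `M` is a maximal subgroup of the subgroup `A`. -/
def IsMaxIn (M A : Subgroup G) : Prop :=
  M < A ∧ ∀ K : Subgroup G, M < K → K ≤ A → K = A

lemma exists_maxIn [Finite G] {C A : Subgroup G} (h : C < A) :
    ∃ M, C ≤ M ∧ IsMaxIn M A := by
  have hfin : ({D : Subgroup G | C ≤ D ∧ D < A}).Finite := Set.toFinite _
  obtain ⟨M, hM, hmax⟩ : ∃ M ∈ {D : Subgroup G | C ≤ D ∧ D < A}, ∀ K ∈ {D : Subgroup G | C ≤ D ∧ D < A}, M ≤ K → M = K :=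
    let ⟨M, hM⟩ := hfin.exists_maximal ⟨C, le_refl C, h⟩
    ⟨M, hM.1, fun K hK hle => le_antisymm hle (hM.2 hK hle)⟩
  refine ⟨M, hM.1, hM.2, fun K hMK hKA => ?_⟩
  by_contra hKA'
  have hK : K ∈ {D : Subgroup G | C ≤ D ∧ D < A} :=
    ⟨hM.1.trans hMK.le, lt_of_le_of_ne hKA hKA'⟩
  exact absurd (hmax K hK hMK.le) hMK.ne

lemma isCoatom_iff_isMaxIn_top {M : Subgroup G} : IsCoatom M ↔ IsMaxIn M ⊤ := by
  constructor
  · intro h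
    exact ⟨lt_top_iff_ne_top.2 h.1, fun K hMK _ => h.2 K hMK⟩
  · intro h
    exact ⟨lt_top_iff_ne_top.1 h.1, fun K hMK => h.2 K hMK le_top⟩

lemma le_frattini {N : Subgroup G} (h : ∀ M : Subgroup G, IsCoatom M → N ≤ M) :
    N ≤ frattini G := by
  unfold frattini Order.radical
  exact le_iInf fun M => le_iInf fun hM => h M hM

/-- The key "relative nongenerator" lemma: if `N ≤ A ≤ B`, `N` is normalized by `B`,
and `N` lies in every maximal subgroup of `A`, then `N` lies in every maximal
subgroup of `B`. -/
lemma maxIn_push [Finite G] {A B N : Subgroup G} (hAB : A ≤ B) (hNA : N ≤ A)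
    (hNB : ∀ b ∈ B, ∀ n ∈ N, b * n * b⁻¹ ∈ N)
    (hNmax : ∀ M, IsMaxIn M A → N ≤ M)
    {M' : Subgroup G} (hM' : IsMaxIn M' B) : N ≤ M' := by
  by_contra hcon
  -- N ⊔ M' = B
  have hNM'B : N ⊔ M' = B := by
    refine hM'.2 _ ?_ (sup_le (hNA.trans hAB) hM'.1.le)
    refine lt_of_le_of_ne le_sup_right fun hEq => hcon ?_
    rw [hEq]; exact le_sup_left
  -- Dedekind: A = N ⊔ (A ⊓ M')
  have hnormM' : ∀ b ∈ M', ∀ n ∈ N, b * n * b⁻¹ ∈ N :=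
    fun b hb => hNB b (hM'.1.le hb)
  have hded : A = N ⊔ (A ⊓ M') := by
    refine le_antisymm ?_ (sup_le hNA inf_le_left)
    intro a ha
    have haB : a ∈ N ⊔ M' := hNM'B.symm ▸ hAB ha
    rw [mem_sup_of_norm hnormM'] at haB
    obtain ⟨n, hn, m, hm, rfl⟩ := haB
    have hmA : m ∈ A ⊓ M' := by
      refine ⟨?_, hm⟩
      have := A.mul_mem (A.inv_mem (hNA hn)) ha
      simpa using this
    exact mul_mem (le_sup_left (a := N) (b := A ⊓ M') hn)
      (le_sup_right (a := N) (b := A ⊓ M') hmA)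
  -- now A ⊓ M' < A or = A
  rcases eq_or_ne (A ⊓ M') A with hEq | hNe
  · have : A ≤ M' := by rw [← hEq]; exact inf_le_right
    exact hcon (hNA.trans this)
  · obtain ⟨M, hle, hMmax⟩ := exists_maxIn (lt_of_le_of_ne inf_le_left hNe)
    have : A ≤ M := by
      rw [hded]
      exact sup_le (hNmax M hMmax) hle
    exact absurd (lt_of_lt_of_le hMmax.1 this) (lt_irrefl M)

end Aux1

section Aux2

variable {G : Type*} [Group G]

lemma map_subtype_subgroupOf {A : Subgroup G} (P : Subgroup ↥A) :
    (P.map A.subtype).subgroupOf A = P := by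
  rw [← Subgroup.comap_subtype]
  exact Subgroup.comap_map_eq_self_of_injective (Subgroup.subtype_injective A) P

lemma isCoatom_subgroupOf {M A : Subgroup G} (h : IsMaxIn M A) :
    IsCoatom (M.subgroupOf A) := by
  have hMA : M ≤ A := h.1.le
  have hmapM : (M.subgroupOf A).map A.subtype = M := by
    rw [Subgroup.subgroupOf_map_subtype, inf_eq_left.2 hMA]
  have hmaptop : Subgroup.map A.subtype ⊤ = A := by
    rw [← Subgroup.top_subgroupOf A, Subgroup.subgroupOf_map_subtype, top_inf_eq]
  constructor
  · intro htop
    have h2 : (M.subgroupOf A).map A.subtype = (⊤ : Subgroup ↥A).map A.subtype := by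
      rw [htop]
    rw [hmapM, hmaptop] at h2
    exact h.1.ne h2
  · intro B' hB'
    have hK : M < Subgroup.map A.subtype B' := by
      refine lt_of_le_of_ne (hmapM ▸ Subgroup.map_mono hB'.le) fun hEq => ?_
      exact hB'.ne (Subgroup.map_injective (Subgroup.subtype_injective A) (hmapM.trans hEq))
    have hKA := h.2 _ hK (Subgroup.map_subtype_le B')
    exact Subgroup.map_injective (Subgroup.subtype_injective A) (hKA.trans hmaptop.symm)

lemma frattini_map_subtype_le {A M : Subgroup G} (hM : IsMaxIn M A) :
    (frattini ↥A).map A.subtype ≤ M := by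
  have h1 : (frattini ↥A) ≤ M.subgroupOf A := frattini_le_coatom (isCoatom_subgroupOf hM)
  calc (frattini ↥A).map A.subtype ≤ (M.subgroupOf A).map A.subtype := Subgroup.map_mono h1
    _ = M ⊓ A := Subgroup.subgroupOf_map_subtype M A
    _ ≤ M := inf_le_left

lemma frattini_subgroup_eq_bot [Finite G] (hfr : frattini G = ⊥) (A : Subgroup G)
    (hA : A.Normal) : frattini ↥A = ⊥ := by
  set N := (frattini ↥A).map A.subtype with hNdef
  have hNA : N ≤ A := Subgroup.map_subtype_le _
  have hNB : ∀ b ∈ (⊤ : Subgroup G), ∀ n ∈ N, b * n * b⁻¹ ∈ N := by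
    rintro b - n hn
    obtain ⟨z, hz, rfl⟩ := hn
    have hz2 : (MulAut.conjNormal b) z ∈ frattini ↥A := by
      have hchar := (frattini_characteristic (G := ↥A)).fixed (MulAut.conjNormal b).symm
      rw [← hchar, Subgroup.mem_comap]
      simpa using hz
    refine ⟨(MulAut.conjNormal b) z, hz2, ?_⟩
    simp
  have hle : N ≤ frattini G := by
    refine le_frattini fun M hM => ?_
    exact maxIn_push le_top hNA hNB (fun M' hM' => frattini_map_subtype_le hM')
      (isCoatom_iff_isMaxIn_top.1 hM)
  rw [hfr, le_bot_iff] at hle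
  ext z
  simp only [Subgroup.mem_bot]
  constructor
  · intro hz
    have : (z : G) ∈ N := ⟨z, hz, rfl⟩
    rw [hle] at this
    exact Subtype.ext (by simpa using this)
  · rintro rfl; exact (frattini ↥A).one_mem

lemma comm_of_nilpotent_frattini_bot [Finite G] (hnil : Group.IsNilpotent G)
    (hfr : frattini G = ⊥) (a b : G) : a * b = b * a := by
  have hnc : NormalizerCondition G := normalizerCondition_of_isNilpotent
  have key : ∀ M : Subgroup G, IsCoatom M → ⁅a, b⁆ ∈ M := by
    intro M hM
    have hNorm : M.Normal := Subgroup.NormalizerCondition.normal_of_coatom M hnc hM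
    have hQ : ∀ s t : G ⧸ M, s * t = t * s := by
      intro s t
      rcases eq_or_ne s 1 with rfl | hs
      · rw [one_mul, mul_one]
      have hMle : M ≤ Subgroup.comap (QuotientGroup.mk' M) (Subgroup.zpowers s) := by
        intro m hm
        have h1 : (QuotientGroup.mk' M) m = 1 := (QuotientGroup.eq_one_iff m).2 hm
        simp only [Subgroup.mem_comap, h1]
        exact Subgroup.one_mem _
      have hne : M ≠ Subgroup.comap (QuotientGroup.mk' M) (Subgroup.zpowers s) := by
        intro hEq
        obtain ⟨x, rfl⟩ := QuotientGroup.mk'_surjective M s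
        have hx : x ∈ Subgroup.comap (QuotientGroup.mk' M)
            (Subgroup.zpowers ((QuotientGroup.mk' M) x)) :=
          Subgroup.mem_comap.2 (Subgroup.mem_zpowers ((QuotientGroup.mk' M) x))
        rw [← hEq] at hx
        exact hs ((QuotientGroup.eq_one_iff x).2 hx)
      have hco : Subgroup.comap (QuotientGroup.mk' M) (Subgroup.zpowers s) = ⊤ :=
        hM.2 _ (lt_of_le_of_ne hMle hne)
      obtain ⟨y, rfl⟩ := QuotientGroup.mk'_surjective M t
      have hy : (QuotientGroup.mk' M) y ∈ Subgroup.zpowers s := by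
        have : y ∈ Subgroup.comap (QuotientGroup.mk' M) (Subgroup.zpowers s) := by
          rw [hco]; trivial
        exact this
      obtain ⟨k, hk⟩ := Subgroup.mem_zpowers_iff.1 hy
      rw [← hk]
      exact ((Commute.refl s).zpow_right k).eq
    have hone : (QuotientGroup.mk' M) ⁅a, b⁆ = 1 := by
      rw [map_commutatorElement]
      exact commutatorElement_eq_one_iff_mul_comm.2 (hQ _ _)
    exact (QuotientGroup.eq_one_iff _).1 hone
  have hmem : ⁅a, b⁆ ∈ frattini G := by
    have h2 : Subgroup.zpowers ⁅a, b⁆ ≤ frattini G :=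
      le_frattini fun M hM => (Subgroup.zpowers_le).2 (key M hM)
    exact h2 (Subgroup.mem_zpowers _)
  rw [hfr, Subgroup.mem_bot] at hmem
  exact commutatorElement_eq_one_iff_mul_comm.1 hmem

lemma isNilpotent_of_comm (h : ∀ a b : G, a * b = b * a) : Group.IsNilpotent G := by
  refine ⟨1, ?_⟩
  rw [upperCentralSeries_one]
  exact (Subgroup.eq_top_iff' _).mpr fun x => Subgroup.mem_center_iff.2 fun y => h y x

lemma sSup_normal (s : Set (Subgroup G)) (h : ∀ N ∈ s, N.Normal) : (sSup s).Normal := by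
  constructor
  intro n hn g
  have h1 : (sSup s).map (MulAut.conj g).toMonoidHom = sSup s := by
    rw [sSup_eq_iSup, Subgroup.map_iSup]
    refine iSup_congr fun N => ?_
    rw [Subgroup.map_iSup]
    exact iSup_congr_Prop Iff.rfl fun hN => map_conj_eq_self (h N hN) g
  rw [← h1]
  exact Subgroup.mem_map.2 ⟨n, hn, rfl⟩

lemma exists_minNormal_le [Finite G] {V : Subgroup G} (hV : V.Normal) (h : V ≠ ⊥) :
    ∃ W : Subgroup G, W ≤ V ∧ IsMinimalNormal W := by
  have hfin : ({D : Subgroup G | D ≤ V ∧ D.Normal ∧ D ≠ ⊥}).Finite := Set.toFinite _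
  obtain ⟨W, hW, hmin⟩ : ∃ W ∈ {D : Subgroup G | D ≤ V ∧ D.Normal ∧ D ≠ ⊥}, ∀ K ∈ {D : Subgroup G | D ≤ V ∧ D.Normal ∧ D ≠ ⊥}, K ≤ W → W = K :=
    let ⟨W, hW⟩ := hfin.exists_minimal ⟨V, le_refl V, hV, h⟩
    ⟨W, hW.1, fun K hK hle => le_antisymm (hW.2 hK hle) hle⟩
  refine ⟨W, hW.1, hW.2.1, hW.2.2, fun K hK hKW => ?_⟩
  rcases eq_or_ne K ⊥ with rfl | hne
  · exact Or.inl rfl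
  · exact Or.inr (hmin K ⟨hKW.trans hW.1, hK, hne⟩ hKW).symm

lemma gaschuetz [Finite G] {A : Subgroup G} (hA : A.Normal)
    (hab : ∀ a ∈ A, ∀ b ∈ A, a * b = b * a)
    (hfr : A ⊓ frattini G = ⊥) :
    ∃ L : Subgroup G, A ⊔ L = ⊤ ∧ A ⊓ L = ⊥ := by
  have hfin : ({L : Subgroup G | A ⊔ L = ⊤}).Finite := Set.toFinite _
  obtain ⟨L, hL, hmin⟩ : ∃ L ∈ {L : Subgroup G | A ⊔ L = ⊤}, ∀ K ∈ {L : Subgroup G | A ⊔ L = ⊤}, K ≤ L → L = K :=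
    let ⟨L, hL⟩ := hfin.exists_minimal ⟨⊤, by simp⟩
    ⟨L, hL.1, fun K hK hle => le_antisymm (hL.2 hK hle) hle⟩
  simp only [Set.mem_setOf_eq] at hL
  refine ⟨L, hL, ?_⟩
  have hnormA : ∀ b ∈ L, ∀ a ∈ A, b * a * b⁻¹ ∈ A := fun b _ a ha => hA.conj_mem a ha b
  have hN : A ⊓ L ≤ frattini G := by
    have hNB : ∀ b ∈ (⊤ : Subgroup G), ∀ n ∈ A ⊓ L, b * n * b⁻¹ ∈ A ⊓ L := by
      rintro b - n hn
      have hb : b ∈ A ⊔ L := by rw [hL]; trivial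
      rw [mem_sup_of_norm hnormA] at hb
      obtain ⟨a, ha, l, hl, rfl⟩ := hb
      have step1 : l * n * l⁻¹ ∈ A ⊓ L :=
        ⟨hA.conj_mem n hn.1 l, L.mul_mem (L.mul_mem hl hn.2) (L.inv_mem hl)⟩
      have step2 : a * (l * n * l⁻¹) * a⁻¹ ∈ A ⊓ L := by
        have hcm : a * (l * n * l⁻¹) = (l * n * l⁻¹) * a := hab a ha _ step1.1
        have : a * (l * n * l⁻¹) * a⁻¹ = l * n * l⁻¹ := by
          rw [hcm]; group
        rw [this]; exact step1
      have heq : (a * l) * n * (a * l)⁻¹ = a * (l * n * l⁻¹) * a⁻¹ := by group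
      rw [heq]; exact step2
    refine le_frattini fun M hM => ?_
    refine maxIn_push le_top inf_le_right hNB ?_ (isCoatom_iff_isMaxIn_top.1 hM)
    intro M hMx
    by_contra hc
    have h1 : (A ⊓ L) ⊔ M = L := by
      refine hMx.2 _ ?_ (sup_le inf_le_right hMx.1.le)
      refine lt_of_le_of_ne le_sup_right fun e => hc ?_
      rw [e]; exact le_sup_left
    have h2 : A ⊔ M = ⊤ := by
      have h3 : A ⊔ L = A ⊔ M := by
        rw [← h1, ← sup_assoc, sup_inf_self]
      rw [← h3]; exact hL
    have := hmin M h2 (le_of_lt hMx.1)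
    have h9 : L = M := by simpa using this
    exact (ne_of_lt hMx.1) h9.symm
  refine le_bot_iff.1 ?_
  calc A ⊓ L ≤ A ⊓ frattini G := le_inf inf_le_left hN
    _ = ⊥ := hfr

/-- Theorem A: in a finite group with trivial Frattini subgroup, every nilpotent
normal subgroup is contained in the socle. -/
lemma nilpotent_normal_le_socle [Finite G] (hfr : frattini G = ⊥)
    {K : Subgroup G} (hK : K.Normal) (hnil : Group.IsNilpotent ↥K) :
    K ≤ socle' G := by
  have hKfr : frattini ↥K = ⊥ := frattini_subgroup_eq_bot hfr K hK
  have habK : ∀ a ∈ K, ∀ b ∈ K, a * b = b * a := by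
    intro a ha b hb
    have := comm_of_nilpotent_frattini_bot hnil hKfr ⟨a, ha⟩ ⟨b, hb⟩
    exact congrArg Subtype.val this
  set S := sSup {W : Subgroup G | IsMinimalNormal W ∧ W ≤ K} with hSdef
  have hSK : S ≤ K := sSup_le fun W hW => hW.2
  have hSnormal : S.Normal := sSup_normal _ fun N hN => hN.1.1
  obtain ⟨L, hSL, hSLbot⟩ := gaschuetz hSnormal
    (fun a ha b hb => habK a (hSK ha) b (hSK hb))
    (by rw [hfr]; exact le_antisymm inf_le_right bot_le)
  have hnormS : ∀ b ∈ L, ∀ a ∈ S, b * a * b⁻¹ ∈ S := fun b _ a ha => hSnormal.conj_mem a ha b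
  have hded : K ≤ S ⊔ (K ⊓ L) := by
    intro k hk
    have hk2 : k ∈ S ⊔ L := by rw [hSL]; trivial
    rw [mem_sup_of_norm hnormS] at hk2
    obtain ⟨s, hs, l, hl, rfl⟩ := hk2
    have hlK : l ∈ K ⊓ L := by
      refine ⟨?_, hl⟩
      have := K.mul_mem (K.inv_mem (hSK hs)) hk
      simpa using this
    exact mul_mem (le_sup_left (a := S) (b := K ⊓ L) hs)
      (le_sup_right (a := S) (b := K ⊓ L) hlK)
  have hKL : (K ⊓ L).Normal := by
    constructor
    intro n hn g
    have hg : g ∈ S ⊔ L := by rw [hSL]; trivial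
    rw [mem_sup_of_norm hnormS] at hg
    obtain ⟨s, hs, l, hl, rfl⟩ := hg
    have h1 : l * n * l⁻¹ ∈ K ⊓ L :=
      ⟨hK.conj_mem n hn.1 l, L.mul_mem (L.mul_mem hl hn.2) (L.inv_mem hl)⟩
    have h2 : s * (l * n * l⁻¹) * s⁻¹ ∈ K ⊓ L := by
      have hcm : s * (l * n * l⁻¹) = (l * n * l⁻¹) * s := habK s (hSK hs) _ h1.1
      have heq : s * (l * n * l⁻¹) * s⁻¹ = l * n * l⁻¹ := by rw [hcm]; group
      rw [heq]; exact h1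
    have heq : (s * l) * n * (s * l)⁻¹ = s * (l * n * l⁻¹) * s⁻¹ := by group
    rw [heq]; exact h2
  rcases eq_or_ne (K ⊓ L) ⊥ with hbot | hne
  · have hKS : K = S := by
      refine le_antisymm ?_ hSK
      calc K ≤ S ⊔ (K ⊓ L) := hded
        _ = S := by rw [hbot, sup_bot_eq]
    rw [hKS]
    exact sSup_le_sSup fun W hW => hW.1
  · obtain ⟨W, hWle, hWmin⟩ := exists_minNormal_le hKL hne
    exfalso
    have hWS : W ≤ S := le_sSup ⟨hWmin, hWle.trans inf_le_left⟩
    have hWSL : W ≤ S ⊓ L := le_inf hWS (hWle.trans inf_le_right)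
    rw [hSLbot] at hWSL
    exact hWmin.2.1 (le_bot_iff.1 hWSL)

end Aux2

section Aux3

variable {G : Type*} [Group G]

/-- The conjugate `g A g⁻¹`. -/
def cnj (g : G) (A : Subgroup G) : Subgroup G := A.map (MulAut.conj g).toMonoidHom

lemma mem_cnj {g x : G} {A : Subgroup G} : x ∈ cnj g A ↔ g⁻¹ * x * g ∈ A := by
  simp only [cnj, Subgroup.mem_map, MulEquiv.coe_toMonoidHom, MulAut.conj_apply]
  constructor
  · rintro ⟨a, ha, rfl⟩
    have : g⁻¹ * (g * a * g⁻¹) * g = a := by group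
    rwa [this]
  · intro h
    exact ⟨g⁻¹ * x * g, h, by group⟩

lemma cnj_cnj (g h : G) (A : Subgroup G) : cnj g (cnj h A) = cnj (g * h) A := by
  ext x
  simp only [mem_cnj]
  constructor <;> intro hx
  · have e : (g * h)⁻¹ * x * (g * h) = h⁻¹ * (g⁻¹ * x * g) * h := by group
    rwa [e]
  · have e : h⁻¹ * (g⁻¹ * x * g) * h = (g * h)⁻¹ * x * (g * h) := by group
    rwa [e]

lemma cnj_one (A : Subgroup G) : cnj 1 A = A := by
  ext x; simp [mem_cnj]

lemma cnj_bot (g : G) : cnj g (⊥ : Subgroup G) = ⊥ := by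
  ext x
  simp only [mem_cnj, Subgroup.mem_bot]
  constructor
  · intro h
    have : x = g * (g⁻¹ * x * g) * g⁻¹ := by group
    rw [this, h]; group
  · rintro rfl; group

lemma cnj_mono {g : G} {A B : Subgroup G} (h : A ≤ B) : cnj g A ≤ cnj g B :=
  Subgroup.map_mono h

lemma cnj_eq_self_of_normal {K : Subgroup G} (hK : K.Normal) (g : G) : cnj g K = K := by
  ext x
  rw [mem_cnj]
  constructor
  · intro h
    have := hK.conj_mem _ h g
    have e : g * (g⁻¹ * x * g) * g⁻¹ = x := by group
    rwa [e] at this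
  · intro h
    have := hK.conj_mem _ h g⁻¹
    have e : g⁻¹ * x * g⁻¹⁻¹ = g⁻¹ * x * g := by group
    rwa [e] at this

/-- Lemma D: if `Y` is normal in `G`, `Φ(G) = ⊥`, and `W` is a minimal
`Y`-invariant subgroup of `Y`, then `W` is contained in the socle of `G`. -/
lemma minNormalIn_le_socle [Finite G] (hfr : frattini G = ⊥)
    {Y W : Subgroup G} (hY : Y.Normal) (hWY : W ≤ Y) (hWbot : W ≠ ⊥)
    (hWinv : ∀ y ∈ Y, ∀ w ∈ W, y * w * y⁻¹ ∈ W)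
    (hmin : ∀ V : Subgroup G, V ≤ W → (∀ y ∈ Y, ∀ v ∈ V, y * v * y⁻¹ ∈ V) →
      V = ⊥ ∨ V = W) :
    W ≤ socle' G := by
  classical
  cases nonempty_fintype G
  -- conjugates of Y-invariant subgroups are Y-invariant
  have hinvgen : ∀ (A : Subgroup G), (∀ y ∈ Y, ∀ a ∈ A, y * a * y⁻¹ ∈ A) →
      ∀ (g : G), ∀ y ∈ Y, ∀ w ∈ cnj g A, y * w * y⁻¹ ∈ cnj g A := by
    intro A hA g y hy w hw
    rw [mem_cnj] at hw ⊢
    have hy' : g⁻¹ * y * g ∈ Y := by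
      have := hY.conj_mem y hy g⁻¹
      have e : g⁻¹ * y * g⁻¹⁻¹ = g⁻¹ * y * g := by group
      rwa [e] at this
    have h2 := hA _ hy' _ hw
    have e : g⁻¹ * (y * w * y⁻¹) * g
        = (g⁻¹ * y * g) * (g⁻¹ * w * g) * (g⁻¹ * y * g)⁻¹ := by group
    rwa [e]
  have hWinv' : ∀ (g : G), ∀ y ∈ Y, ∀ w ∈ cnj g W, y * w * y⁻¹ ∈ cnj g W :=
    hinvgen W hWinv
  have hWgY : ∀ g : G, cnj g W ≤ Y := fun g =>
    (cnj_mono hWY).trans (cnj_eq_self_of_normal hY g).le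
  -- minimality for conjugates
  have hmin' : ∀ (g : G) (V : Subgroup G), V ≤ cnj g W →
      (∀ y ∈ Y, ∀ v ∈ V, y * v * y⁻¹ ∈ V) → V = ⊥ ∨ V = cnj g W := by
    intro g V hle hinv
    have h1 : cnj g⁻¹ V ≤ W := by
      have := cnj_mono (g := g⁻¹) hle
      rwa [cnj_cnj, inv_mul_cancel, cnj_one] at this
    rcases hmin (cnj g⁻¹ V) h1 (hinvgen V hinv g⁻¹) with h | h
    · left
      have := congrArg (cnj g) h
      rwa [cnj_cnj, mul_inv_cancel, cnj_one, cnj_bot] at this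
    · right
      have := congrArg (cnj g) h
      rwa [cnj_cnj, mul_inv_cancel, cnj_one] at this
  -- pairs of conjugates: equal or elementwise commuting
  have hpair : ∀ g h : G, cnj g W = cnj h W ∨
      ∀ x ∈ cnj g W, ∀ y ∈ cnj h W, x * y = y * x := by
    intro g h
    set I := cnj g W ⊓ cnj h W with hI
    have hIinv : ∀ y ∈ Y, ∀ v ∈ I, y * v * y⁻¹ ∈ I := by
      intro y hy v hv
      rw [Subgroup.mem_inf] at hv ⊢
      exact ⟨hWinv' g y hy v hv.1, hWinv' h y hy v hv.2⟩
    have hcomm_of_bot : I = ⊥ → ∀ x ∈ cnj g W, ∀ y ∈ cnj h W, x * y = y * x := by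
      intro hIb x hx y hy
      have hc : x * y * x⁻¹ * y⁻¹ ∈ I := by
        rw [Subgroup.mem_inf]
        constructor
        · have h1 : y * x⁻¹ * y⁻¹ ∈ cnj g W := hWinv' g y (hWgY h hy) x⁻¹ (inv_mem hx)
          have e : x * y * x⁻¹ * y⁻¹ = x * (y * x⁻¹ * y⁻¹) := by group
          rw [e]; exact mul_mem hx h1
        · have h1 : x * y * x⁻¹ ∈ cnj h W := hWinv' h x (hWgY g hx) y hy
          exact mul_mem h1 (inv_mem hy)
      rw [hIb, Subgroup.mem_bot] at hc
      have : x * y = (x * y * x⁻¹ * y⁻¹) * (y * x) := by group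
      rw [this, hc, one_mul]
    rcases hmin' g I inf_le_left hIinv with hIb | hIg
    · exact Or.inr (hcomm_of_bot hIb)
    · rcases hmin' h I inf_le_right hIinv with hIb | hIh
      · exfalso
        have hgb : cnj g W = ⊥ := by rw [← hIg, hIb]
        have := congrArg (cnj g⁻¹) hgb
        rw [cnj_cnj, inv_mul_cancel, cnj_one, cnj_bot] at this
        exact hWbot this
      · exact Or.inl (by rw [← hIg, hIh])
  set D := ⨆ g : G, cnj g W with hD
  have hWD : W ≤ D := by
    have := le_iSup (fun g : G => cnj g W) 1
    rwa [cnj_one] at this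
  have hDY : D ≤ Y := iSup_le hWgY
  have hDnormal : D.Normal := by
    constructor
    intro n hn g
    refine Subgroup.iSup_induction (C := fun x => g * x * g⁻¹ ∈ D) _ hn ?_ ?_ ?_
    · intro h x hx
      have h1 : g * x * g⁻¹ ∈ cnj (g * h) W := by
        rw [← cnj_cnj]
        exact Subgroup.mem_map.2 ⟨x, hx, rfl⟩
      exact le_iSup (fun k : G => cnj k W) (g * h) h1
    · simpa using D.one_mem
    · intro x y hx hy
      have e : g * (x * y) * g⁻¹ = (g * x * g⁻¹) * (g * y * g⁻¹) := by group
      rw [e]; exact mul_mem hx hy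
  -- case split on the "center" of W
  have hZinv : ∀ y ∈ Y, ∀ v ∈ W ⊓ Subgroup.centralizer (W : Set G),
      y * v * y⁻¹ ∈ W ⊓ Subgroup.centralizer (W : Set G) := by
    intro y hy v hv
    rw [Subgroup.mem_inf] at hv ⊢
    refine ⟨hWinv y hy v hv.1, ?_⟩
    rw [Subgroup.mem_centralizer_iff]
    intro w hw
    have hw' : y⁻¹ * w * y ∈ W := by
      have := hWinv y⁻¹ (inv_mem hy) w hw
      have e : y⁻¹ * w * y⁻¹⁻¹ = y⁻¹ * w * y := by group
      rwa [e] at this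
    have hc := Subgroup.mem_centralizer_iff.1 hv.2 _ hw'
    have e1 : w * (y * v * y⁻¹) = y * ((y⁻¹ * w * y) * v) * y⁻¹ := by group
    rw [e1, hc]
    group
  rcases hmin _ inf_le_left hZinv with hZbot | hZW
  · -- W has trivial center: the normal closure D is a minimal normal subgroup
    set Cz := ⨅ g : G, Subgroup.centralizer ((cnj g W : Subgroup G) : Set G) with hCz
    -- the finset-indexed partial joins
    set SS : Finset G → Subgroup G :=
      fun s => ⨆ x : {a : G // a ∈ s}, cnj x.1 W with hSS
    have hins : ∀ (g : G) (s : Finset G), SS (insert g s) = SS s ⊔ cnj g W := by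
      intro g s
      refine le_antisymm ?_ ?_
      · refine iSup_le fun ⟨a, ha⟩ => ?_
        rcases Finset.mem_insert.1 ha with rfl | ha'
        · exact le_sup_right
        · exact le_trans (le_iSup (fun x : {a : G // a ∈ s} => cnj x.1 W) ⟨a, ha'⟩)
            le_sup_left
      · refine sup_le ?_ ?_
        · refine iSup_le fun ⟨a, ha⟩ => ?_
          exact le_iSup (fun x : {a : G // a ∈ insert g s} => cnj x.1 W)
            ⟨a, Finset.mem_insert_of_mem ha⟩
        · exact le_iSup (fun x : {a : G // a ∈ insert g s} => cnj x.1 W)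
            ⟨g, Finset.mem_insert_self g s⟩
    have hkey : ∀ s : Finset G, SS s ⊓ Cz ≤ ⊥ := by
      intro s
      induction s using Finset.induction_on with
      | empty =>
        have : SS ∅ = ⊥ := by
          refine le_antisymm (iSup_le fun ⟨a, ha⟩ => absurd ha (by simp)) bot_le
        rw [this]
        exact inf_le_left.trans le_rfl
      | insert g s hgs ih =>
        rw [hins g s]
        by_cases hex : ∃ h ∈ s, cnj g W = cnj h W
        · obtain ⟨h, hh, hEq⟩ := hex
          have hcoll : SS s ⊔ cnj g W = SS s := by
            refine sup_eq_left.2 ?_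
            rw [hEq]
            exact le_iSup (fun x : {a : G // a ∈ s} => cnj x.1 W) ⟨h, hh⟩
          rw [hcoll]; exact ih
        · push_neg at hex
          have hAc : SS s ≤ Subgroup.centralizer ((cnj g W : Subgroup G) : Set G) := by
            refine iSup_le fun ⟨x, hx⟩ => ?_
            intro a ha
            rw [Subgroup.mem_centralizer_iff]
            intro u hu
            rcases hpair x g with hEq | hc
            · exact absurd hEq.symm (hex x hx)
            · exact (hc a ha u hu).symm
          have hnormAg : ∀ b ∈ cnj g W, ∀ a ∈ SS s, b * a * b⁻¹ ∈ SS s := by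
            intro b hb a ha
            have hcm := Subgroup.mem_centralizer_iff.1 (hAc ha) b hb
            have e : b * a * b⁻¹ = a := by rw [hcm]; group
            rw [e]; exact ha
          intro k hk
          rw [Subgroup.mem_inf] at hk
          obtain ⟨hk1, hk2⟩ := hk
          rw [mem_sup_of_norm hnormAg] at hk1
          obtain ⟨x, hx, w, hw, rfl⟩ := hk1
          have hkc : ∀ u ∈ cnj g W, u * (x * w) = (x * w) * u := by
            intro u hu
            have := Subgroup.mem_iInf.1 hk2 g
            exact Subgroup.mem_centralizer_iff.1 this u hu
          have hxc : ∀ u ∈ cnj g W, u * x = x * u := fun u hu =>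
            Subgroup.mem_centralizer_iff.1 (hAc hx) u hu
          have hwc : w ∈ Subgroup.centralizer ((cnj g W : Subgroup G) : Set G) := by
            rw [Subgroup.mem_centralizer_iff]
            intro u hu
            have e1 := hkc u hu
            have e2 := hxc u hu
            have e3 : x * (u * w) = x * (w * u) := by
              calc x * (u * w) = (x * u) * w := by rw [mul_assoc]
                _ = (u * x) * w := by rw [e2]
                _ = u * (x * w) := by rw [mul_assoc]
                _ = (x * w) * u := e1
                _ = x * (w * u) := by rw [mul_assoc]
            exact mul_left_cancel e3
          have hw1 : w = 1 := by
            have hgw : g⁻¹ * w * g ∈ W ⊓ Subgroup.centralizer (W : Set G) := by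
              rw [Subgroup.mem_inf]
              constructor
              · exact mem_cnj.1 hw
              · rw [Subgroup.mem_centralizer_iff]
                intro v hv
                have hv' : g * v * g⁻¹ ∈ cnj g W := mem_cnj.2 (by
                  have e : g⁻¹ * (g * v * g⁻¹) * g = v := by group
                  rw [e]; exact hv)
                have := Subgroup.mem_centralizer_iff.1 hwc _ hv'
                -- (g v g⁻¹) * w = w * (g v g⁻¹)
                have e : v * (g⁻¹ * w * g) = g⁻¹ * ((g * v * g⁻¹) * w) * g := by group
                rw [e, this]
                group
            rw [hZbot, Subgroup.mem_bot] at hgw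
            have : w = g * (g⁻¹ * w * g) * g⁻¹ := by group
            rw [this, hgw]; group
          rw [hw1, mul_one] at hk2 ⊢
          exact ih (Subgroup.mem_inf.2 ⟨hx, hk2⟩)
    have hDCz : D ⊓ Cz ≤ ⊥ := by
      have hDu : D ≤ SS Finset.univ :=
        iSup_le fun g => le_iSup (fun x : {a : G // a ∈ Finset.univ} => cnj x.1 W)
          ⟨g, Finset.mem_univ g⟩
      exact le_trans (inf_le_inf_right _ hDu) (hkey Finset.univ)
    refine le_trans hWD (le_sSup ?_)
    refine ⟨hDnormal, ?_, ?_⟩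
    · intro hDbot
      exact hWbot (le_bot_iff.1 (hDbot ▸ hWD))
    · intro K hK hKD
      rcases eq_or_ne K ⊥ with rfl | hKne
      · exact Or.inl rfl
      right
      by_cases hall : ∀ g : G, K ⊓ cnj g W = ⊥
      · exfalso
        have hKCz : K ≤ Cz := by
          refine le_iInf fun g => ?_
          intro x hx
          rw [Subgroup.mem_centralizer_iff]
          intro u hu
          have h1 : x * u * x⁻¹ * u⁻¹ ∈ K := by
            have h2 : u * x⁻¹ * u⁻¹ ∈ K := hK.conj_mem x⁻¹ (K.inv_mem hx) u
            have e : x * u * x⁻¹ * u⁻¹ = x * (u * x⁻¹ * u⁻¹) := by group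
            rw [e]; exact K.mul_mem hx h2
          have h2 : x * u * x⁻¹ * u⁻¹ ∈ cnj g W := by
            have hxY : x ∈ Y := hDY (hKD hx)
            exact mul_mem (hWinv' g x hxY u hu) (inv_mem hu)
          have h3 : x * u * x⁻¹ * u⁻¹ ∈ K ⊓ cnj g W := Subgroup.mem_inf.2 ⟨h1, h2⟩
          rw [hall g, Subgroup.mem_bot] at h3
          have e : u * x = (x * u * x⁻¹ * u⁻¹)⁻¹ * (x * u) := by group
          rw [e, h3]; group
        have hKb : K ≤ ⊥ := le_trans (le_inf hKD hKCz) hDCz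
        exact hKne (le_bot_iff.1 hKb)
      · push_neg at hall
        obtain ⟨g, hg⟩ := hall
        have hKg : K ⊓ cnj g W = cnj g W := by
          rcases hmin' g (K ⊓ cnj g W) inf_le_right
            (fun y hy v hv => by
              rw [Subgroup.mem_inf] at hv ⊢
              exact ⟨hK.conj_mem v hv.1 y, hWinv' g y hy v hv.2⟩) with h | h
          · exact absurd h hg
          · exact h
        have hgK : cnj g W ≤ K := by rw [← hKg]; exact inf_le_left
        have hallK : ∀ h : G, cnj h W ≤ K := by
          intro h
          have h1 : cnj (h * g⁻¹) (cnj g W) ≤ cnj (h * g⁻¹) K := cnj_mono hgK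
          rw [cnj_cnj, cnj_eq_self_of_normal hK] at h1
          have e : h * g⁻¹ * g = h := by group
          rwa [e] at h1
        exact le_antisymm hKD (iSup_le hallK)
  · -- W is abelian: the normal closure D is abelian normal
    have hWab : W ≤ Subgroup.centralizer (W : Set G) := by
      have h0 := inf_le_right (a := W) (b := Subgroup.centralizer (W : Set G))
      rwa [hZW] at h0
    have hcomm : ∀ g h : G, ∀ x ∈ cnj g W, ∀ y ∈ cnj h W, x * y = y * x := by
      intro g h x hx y hy
      rcases hpair g h with hEq | hc
      · rw [hEq] at hx
        rw [mem_cnj] at hx hy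
        have hab := Subgroup.mem_centralizer_iff.1 (hWab hy) _ hx
        -- (h⁻¹xh) * (h⁻¹yh) = (h⁻¹yh) * (h⁻¹xh)
        have e1 : x * y = h * ((h⁻¹ * x * h) * (h⁻¹ * y * h)) * h⁻¹ := by group
        rw [e1, hab]
        group
      · exact hc x hx y hy
    have hDab : ∀ a ∈ D, ∀ b ∈ D, a * b = b * a := by
      intro a ha
      refine Subgroup.iSup_induction (C := fun a => ∀ b ∈ D, a * b = b * a) _ ha ?_ ?_ ?_
      · intro g x hx b hb
        refine Subgroup.iSup_induction (C := fun b => x * b = b * x) _ hb ?_ ?_ ?_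
        · intro h y hy
          exact hcomm g h x hx y hy
        · simp
        · intro y z hy hz
          calc x * (y * z) = (x * y) * z := by rw [mul_assoc]
            _ = y * (x * z) := by rw [hy, mul_assoc]
            _ = (y * z) * x := by rw [hz, ← mul_assoc]
      · intro b hb; rw [one_mul, mul_one]
      · intro x y hx hy b hb
        calc (x * y) * b = x * (y * b) := by rw [mul_assoc]
          _ = x * (b * y) := by rw [hy b hb]
          _ = (x * b) * y := by rw [← mul_assoc]
          _ = b * (x * y) := by rw [hx b hb, mul_assoc]
    have hDnil : Group.IsNilpotent ↥D :=
      isNilpotent_of_comm fun x y => Subtype.ext (hDab x x.2 y y.2)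
    exact hWD.trans (nilpotent_normal_le_socle hfr hDnormal hDnil)

end Aux3

section Aux4

lemma frattini_quotient_bot (G : Type*) [Group G] :
    frattini (G ⧸ frattini G) = ⊥ := by
  rw [eq_bot_iff]
  intro q hq
  obtain ⟨x, rfl⟩ := QuotientGroup.mk'_surjective (frattini G) q
  rw [Subgroup.mem_bot]
  suffices hx : x ∈ frattini G by exact (QuotientGroup.eq_one_iff x).2 hx
  have key : ∀ M : Subgroup G, IsCoatom M → x ∈ M := by
    intro M hM
    have hΦM : frattini G ≤ M := frattini_le_coatom hM
    set M' := Subgroup.map (QuotientGroup.mk' (frattini G)) M with hM'def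
    have hcomap : Subgroup.comap (QuotientGroup.mk' (frattini G)) M' = M := by
      rw [hM'def, Subgroup.comap_map_eq, QuotientGroup.ker_mk']
      exact sup_eq_left.2 hΦM
    have hM' : IsCoatom M' := by
      constructor
      · intro htop
        rw [htop, Subgroup.comap_top] at hcomap
        exact hM.1 hcomap.symm
      · intro Q hQ
        have h1 : M ≤ Subgroup.comap (QuotientGroup.mk' (frattini G)) Q := by
          rw [← hcomap]; exact Subgroup.comap_mono hQ.le
        have h2 : M ≠ Subgroup.comap (QuotientGroup.mk' (frattini G)) Q := by
          intro hEq
          have h3 : Q = M' := by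
            rw [← Subgroup.map_comap_eq_self_of_surjective
              (QuotientGroup.mk'_surjective (frattini G)) Q, ← hEq]
          exact (ne_of_lt hQ) h3.symm
        have h4 := hM.2 _ (lt_of_le_of_ne h1 h2)
        have h5 := congrArg (Subgroup.map (QuotientGroup.mk' (frattini G))) h4
        rwa [Subgroup.map_comap_eq_self_of_surjective
          (QuotientGroup.mk'_surjective (frattini G)) Q,
          Subgroup.map_top_of_surjective _
          (QuotientGroup.mk'_surjective (frattini G))] at h5
    have hxM' := frattini_le_coatom hM' hq
    rw [← hcomap]
    exact Subgroup.mem_comap.2 hxM'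
  have h6 : Subgroup.zpowers x ≤ frattini G :=
    le_frattini fun M hM => Subgroup.zpowers_le.2 (key M hM)
  exact h6 (Subgroup.mem_zpowers x)

lemma comap_sSup_of_surjective {G H : Type*} [Group G] [Group H] (f : G →* H)
    (hf : Function.Surjective f) (s : Set (Subgroup H)) :
    Subgroup.comap f (sSup s) = (⨆ B ∈ s, Subgroup.comap f B) ⊔ f.ker := by
  refine le_antisymm ?_ ?_
  · intro x hx
    have hx' : f x ∈ ⨆ B : s, (B : Subgroup H) := by
      have : f x ∈ sSup s := hx
      rwa [sSup_eq_iSup, iSup_subtype'] at this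
    have key := Subgroup.iSup_induction (G := H)
      (C := fun y => ∀ z : G, f z = y →
        z ∈ (⨆ B ∈ s, Subgroup.comap f B) ⊔ f.ker)
      (fun B : s => (B : Subgroup H)) hx' ?_ ?_ ?_
    · exact key x rfl
    · rintro ⟨B, hB⟩ y hy z hz
      have hzB : z ∈ Subgroup.comap f B := by
        rw [Subgroup.mem_comap, hz]; exact hy
      have : z ∈ ⨆ B ∈ s, Subgroup.comap f B :=
        le_iSup₂ (f := fun (B : Subgroup H) (_ : B ∈ s) => Subgroup.comap f B) B hB hzB
      exact le_sup_left (a := ⨆ B ∈ s, Subgroup.comap f B) (b := f.ker) this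
    · intro z hz
      have : z ∈ f.ker := hz
      exact le_sup_right (a := ⨆ B ∈ s, Subgroup.comap f B) (b := f.ker) this
    · intro y₁ y₂ h₁ h₂ z hz
      obtain ⟨z₁, hz₁⟩ := hf y₁
      have hz₂ : f (z₁⁻¹ * z) = y₂ := by
        rw [map_mul, map_inv, hz₁, hz]
        group
      have hm₁ := h₁ z₁ hz₁
      have hm₂ := h₂ (z₁⁻¹ * z) hz₂
      have : z = z₁ * (z₁⁻¹ * z) := by group
      rw [this]
      exact mul_mem hm₁ hm₂
  · refine sup_le ?_ ?_
    · exact iSup₂_le fun B hB => Subgroup.comap_mono (le_sSup hB)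
    · intro z hz
      have : f z = 1 := hz
      have : f z ∈ sSup s := by rw [this]; exact Subgroup.one_mem _
      exact this

lemma socle_map_subtype_le {H : Type*} [Group H] [Finite H] (hfr : frattini H = ⊥)
    (Yb : Subgroup H) (hYb : Yb.Normal) :
    (socle' ↥Yb).map Yb.subtype ≤ socle' H := by
  unfold socle'
  rw [sSup_eq_iSup, Subgroup.map_iSup]
  refine iSup_le fun W => ?_
  rw [Subgroup.map_iSup]
  refine iSup_le fun hW => ?_
  refine minNormalIn_le_socle hfr hYb (Subgroup.map_subtype_le W) ?_ ?_ ?_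
  · intro hb
    refine hW.2.1 ?_
    rw [← map_subtype_subgroupOf W, hb, Subgroup.bot_subgroupOf]
  · intro y hy w hw
    obtain ⟨w0, hw0, rfl⟩ := hw
    have hc := hW.1.conj_mem w0 hw0 ⟨y, hy⟩
    exact ⟨_, hc, rfl⟩
  · intro V hVW hVinv
    have hVY : V ≤ Yb := hVW.trans (Subgroup.map_subtype_le W)
    set V0 := V.subgroupOf Yb with hV0def
    have hmapV0 : V0.map Yb.subtype = V := by
      rw [hV0def, Subgroup.subgroupOf_map_subtype, inf_eq_left.2 hVY]
    have hV0W : V0 ≤ W := by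
      intro v hv
      have hv' : (v : H) ∈ W.map Yb.subtype := hVW hv
      obtain ⟨w0, hw0, he⟩ := hv'
      have : w0 = v := Subtype.ext he
      exact this ▸ hw0
    have hV0n : V0.Normal := by
      constructor
      intro v hv y
      exact hVinv y.1 y.2 v.1 hv
    rcases hW.2.2 V0 hV0n hV0W with h | h
    · left
      rw [← hmapV0, h, Subgroup.map_bot]
    · right
      rw [← hmapV0, h]

lemma isMaxIn_cnj {G : Type*} [Group G] {M A : Subgroup G} (h : IsMaxIn M A) (a : G) :
    IsMaxIn (cnj a M) (cnj a A) := by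
  have hcc : ∀ (B : Subgroup G), cnj a⁻¹ (cnj a B) = B := by
    intro B; rw [cnj_cnj, inv_mul_cancel, cnj_one]
  have hcc' : ∀ (B : Subgroup G), cnj a (cnj a⁻¹ B) = B := by
    intro B; rw [cnj_cnj, mul_inv_cancel, cnj_one]
  constructor
  · refine lt_of_le_of_ne (cnj_mono h.1.le) fun hEq => ?_
    have := congrArg (cnj a⁻¹) hEq
    rw [hcc, hcc] at this
    exact h.1.ne this
  · intro K h1 h2
    have h3 : M < cnj a⁻¹ K := by
      refine lt_of_le_of_ne ?_ fun hEq => ?_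
      · have := cnj_mono (g := a⁻¹) h1.le
        rwa [hcc] at this
      · have := congrArg (cnj a) hEq
        rw [hcc'] at this
        exact h1.ne this
    have h4 : cnj a⁻¹ K ≤ A := by
      have := cnj_mono (g := a⁻¹) h2
      rwa [hcc] at this
    have h5 := h.2 _ h3 h4
    have := congrArg (cnj a) h5
    rwa [hcc'] at this

lemma center_le_frattini_of_perfect {X : Type*} [Group X] [Finite X]
    (hperf : ⁅(⊤ : Subgroup X), (⊤ : Subgroup X)⁆ = ⊤) :
    Subgroup.center X ≤ frattini X := by
  refine le_frattini fun M hM => ?_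
  by_contra hc
  obtain ⟨z, hz, hzM⟩ := SetLike.not_le_iff_exists.1 hc
  have htop : M ⊔ Subgroup.zpowers z = ⊤ := by
    refine hM.2 _ (lt_of_le_of_ne le_sup_left fun hEq => hzM ?_)
    rw [hEq]
    exact (le_sup_right : Subgroup.zpowers z ≤ _) (Subgroup.mem_zpowers z)
  have hzn : ∀ b ∈ Subgroup.zpowers z, ∀ a ∈ M, b * a * b⁻¹ ∈ M := by
    intro b hb a ha
    have hbc : b ∈ Subgroup.center X := (Subgroup.zpowers_le.2 hz) hb
    have h1 := Subgroup.mem_center_iff.1 hbc a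
    have e : b * a * b⁻¹ = a := by rw [← h1]; group
    rw [e]; exact ha
  haveI hMn : M.Normal := by
    constructor
    intro m hm g
    have hg : g ∈ M ⊔ Subgroup.zpowers z := by rw [htop]; trivial
    rw [mem_sup_of_norm hzn] at hg
    obtain ⟨a, ha, b, hb, rfl⟩ := hg
    have hbc : b ∈ Subgroup.center X := (Subgroup.zpowers_le.2 hz) hb
    have h1 : b * m * b⁻¹ = m := by
      have h2 := Subgroup.mem_center_iff.1 hbc m
      rw [← h2]; group
    have e : (a * b) * m * (a * b)⁻¹ = a * (b * m * b⁻¹) * a⁻¹ := by group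
    rw [e, h1]
    exact M.mul_mem (M.mul_mem ha hm) (M.inv_mem ha)
  have hQab : ∀ s t : X ⧸ M, s * t = t * s := by
    have hzp : ∀ s : X ⧸ M, ∃ k : ℤ, s = (QuotientGroup.mk' M z) ^ k := by
      intro s
      obtain ⟨x, rfl⟩ := QuotientGroup.mk'_surjective M s
      have hx : x ∈ M ⊔ Subgroup.zpowers z := by rw [htop]; trivial
      rw [mem_sup_of_norm hzn] at hx
      obtain ⟨a, ha, b, hb, rfl⟩ := hx
      obtain ⟨k, hk⟩ := Subgroup.mem_zpowers_iff.1 hb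
      refine ⟨k, ?_⟩
      rw [map_mul, ← hk, ← map_zpow]
      have h1 : (QuotientGroup.mk' M) a = 1 := (QuotientGroup.eq_one_iff a).2 ha
      rw [h1, one_mul]
    intro s t
    obtain ⟨j, rfl⟩ := hzp s
    obtain ⟨k, rfl⟩ := hzp t
    exact zpow_mul_comm _ j k
  have hcml : ⁅(⊤ : Subgroup X), (⊤ : Subgroup X)⁆ ≤ M := by
    rw [Subgroup.commutator_le]
    intro g₁ _ g₂ _
    have h1 : (QuotientGroup.mk' M) ⁅g₁, g₂⁆ = 1 := by
      rw [map_commutatorElement]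
      exact commutatorElement_eq_one_iff_mul_comm.2 (hQab _ _)
    exact (QuotientGroup.eq_one_iff _).1 h1
  rw [hperf, top_le_iff] at hcml
  exact hM.1 hcml

end Aux4

theorem fstar_le_ftilde (G : Type*) [Group G] [Finite G] :
    FStar G ≤ Ftilde G := by
  classical
  unfold FStar
  set F := Fitting G with hFdef
  set Φ := frattini G with hΦdef
  set π := QuotientGroup.mk' Φ with hπdef
  set ρF := QuotientGroup.mk' F with hρFdef
  have hπsurj := QuotientGroup.mk'_surjective Φ
  have hρFsurj := QuotientGroup.mk'_surjective F
  have hfrH : frattini (G ⧸ Φ) = ⊥ := frattini_quotient_bot G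
  have hFnormal : F.Normal := Fitting_normal G
  have hΦF : Φ ≤ F := le_sSup ⟨inferInstance, frattini_nilpotent⟩
  -- the image of the Fitting subgroup lies in the socle of G/Φ
  have hFitmap : Subgroup.map π F ≤ socle' (G ⧸ Φ) := by
    rw [hFdef]
    unfold Fitting
    rw [sSup_eq_iSup, Subgroup.map_iSup]
    refine iSup_le fun N => ?_
    rw [Subgroup.map_iSup]
    refine iSup_le fun hN => ?_
    have hNn : (N.map π).Normal := hN.1.map π hπsurj
    have hNnil : Group.IsNilpotent ↥(N.map π) := by
      have h0 := hN.2
      exact nilpotent_of_surjective (π.subgroupMap N) (π.subgroupMap_surjective N)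
    exact nilpotent_normal_le_socle hfrH hNn hNnil
  -- membership criterion for Ftilde
  have hFt : ∀ S : Subgroup G, Subgroup.map π S ≤ socle' (G ⧸ Φ) → S ≤ Ftilde G := by
    intro S h
    unfold Ftilde
    exact Subgroup.map_le_iff_le_comap.1 h
  set C := Subgroup.centralizer (F : Set G) with hCdef
  have hCnormal : C.Normal := by
    constructor
    intro t ht g
    rw [hCdef, Subgroup.mem_centralizer_iff] at ht ⊢
    intro f hf
    have hf' : g⁻¹ * f * g ∈ F := by
      have h0 := hFnormal.conj_mem f hf g⁻¹
      have e : g⁻¹ * f * g⁻¹⁻¹ = g⁻¹ * f * g := by group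
      rwa [e] at h0
    have hc := ht _ hf'
    have e : f * (g * t * g⁻¹) = g * ((g⁻¹ * f * g) * t) * g⁻¹ := by group
    rw [e, hc]; group
  set CF := C ⊔ F with hCFdef
  have hFCF : F ≤ CF := le_sup_right
  have hnormCF : ∀ b ∈ F, ∀ a ∈ C, b * a * b⁻¹ ∈ C :=
    fun b _ a ha => hCnormal.conj_mem a ha b
  have hCFnormal : CF.Normal := by
    constructor
    intro n hn g
    rw [hCFdef, mem_sup_of_norm hnormCF] at hn ⊢
    obtain ⟨c, hc, f, hf, rfl⟩ := hn
    exact ⟨g * c * g⁻¹, hCnormal.conj_mem c hc g, g * f * g⁻¹,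
      hFnormal.conj_mem f hf g, by group⟩
  set Mgr := Subgroup.map ρF CF with hMgrdef
  -- the key per-minimal-normal-subgroup result
  have key : ∀ Sb : Subgroup ↥Mgr, IsMinimalNormal Sb →
      Subgroup.comap ρF (Sb.map Mgr.subtype) ≤ Ftilde G := by
    intro Sb hSb
    set Sm := Sb.map Mgr.subtype with hSmdef
    set S := Subgroup.comap ρF Sm with hSdef
    have hSmM : Sm ≤ Mgr := Subgroup.map_subtype_le Sb
    have hFS : F ≤ S := by
      intro f hf
      have h0 : ρF f = 1 := (QuotientGroup.eq_one_iff f).2 hf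
      show ρF f ∈ Sm
      rw [h0]; exact Sm.one_mem
    have hcomapMgr : Subgroup.comap ρF Mgr = CF := by
      rw [hMgrdef, Subgroup.comap_map_eq, QuotientGroup.ker_mk']
      exact sup_eq_left.2 hFCF
    have hSCF : S ≤ CF := by
      rw [← hcomapMgr]
      exact Subgroup.comap_mono hSmM
    have hmapS : Subgroup.map ρF S = Sm :=
      Subgroup.map_comap_eq_self_of_surjective hρFsurj Sm
    have hSinv : ∀ y ∈ CF, ∀ x ∈ S, y * x * y⁻¹ ∈ S := by
      intro y hy x hx
      show ρF (y * x * y⁻¹) ∈ Sm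
      rw [map_mul, map_mul, map_inv]
      have hyM : ρF y ∈ Mgr := ⟨y, hy, rfl⟩
      obtain ⟨sb, hsb, hsbe⟩ := (hx : ρF x ∈ Sm)
      have hc := hSb.1.conj_mem sb hsb ⟨ρF y, hyM⟩
      refine ⟨_, hc, ?_⟩
      simp [← hsbe]
    have hminSm : ∀ U : Subgroup (G ⧸ F), U ≤ Sm →
        (∀ m ∈ Mgr, ∀ u ∈ U, m * u * m⁻¹ ∈ U) → U = ⊥ ∨ U = Sm := by
      intro U hU hUinv
      have hUM : U ≤ Mgr := hU.trans hSmM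
      set U0 := U.subgroupOf Mgr with hU0def
      have hmapU0 : U0.map Mgr.subtype = U := by
        rw [hU0def, Subgroup.subgroupOf_map_subtype, inf_eq_left.2 hUM]
      have hU0Sb : U0 ≤ Sb := by
        intro u hu
        have hu' : (u : G ⧸ F) ∈ Sm := hU hu
        obtain ⟨sb, hsb, he⟩ := hu'
        exact (Subtype.ext he : sb = u) ▸ hsb
      have hU0n : U0.Normal := ⟨fun u hu m => hUinv m.1 m.2 u.1 hu⟩
      rcases hSb.2.2 U0 hU0n hU0Sb with h | h
      · left; rw [← hmapU0, h, Subgroup.map_bot]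
      · right; rw [← hmapU0, h, ← hSmdef]
    have hSmbot : Sm ≠ ⊥ := by
      intro hb
      refine hSb.2.1 ?_
      rw [← map_subtype_subgroupOf Sb, ← hSmdef, hb, Subgroup.bot_subgroupOf]
    set T := S ⊓ C with hTdef
    have hTle : T ≤ S := inf_le_left
    have hTC : T ≤ C := inf_le_right
    have hTCF : T ≤ CF := hTle.trans hSCF
    have hTinv : ∀ y ∈ CF, ∀ t ∈ T, y * t * y⁻¹ ∈ T := by
      intro y hy t ht
      rw [hTdef, Subgroup.mem_inf] at ht ⊢
      exact ⟨hSinv y hy t ht.1, hCnormal.conj_mem t ht.2 y⟩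
    have hST : S = T ⊔ F := by
      refine le_antisymm ?_ (sup_le hTle hFS)
      intro x hx
      have hxCF : x ∈ CF := hSCF hx
      rw [hCFdef, mem_sup_of_norm hnormCF] at hxCF
      obtain ⟨c, hc, f, hf, rfl⟩ := hxCF
      have hcS : c ∈ S := by
        have h0 : (c * f) * f⁻¹ ∈ S := S.mul_mem hx (S.inv_mem (hFS hf))
        simpa using h0
      have hcT : c ∈ T := by rw [hTdef, Subgroup.mem_inf]; exact ⟨hcS, hc⟩
      exact Subgroup.mul_mem _ ((le_sup_left : T ≤ T ⊔ F) hcT)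
        ((le_sup_right : F ≤ T ⊔ F) hf)
    have hmapF : Subgroup.map ρF F = ⊥ := by
      rw [eq_bot_iff]
      rintro q ⟨f, hf, rfl⟩
      have : ρF f = 1 := (QuotientGroup.eq_one_iff f).2 hf
      simp [this]
    have hmapT : Subgroup.map ρF T = Sm := by
      refine le_antisymm ?_ ?_
      · rw [← hmapS]; exact Subgroup.map_mono hTle
      · rw [← hmapS, hST, Subgroup.map_sup, hmapF, sup_bot_eq]
    have hcent : ∀ z ∈ T ⊓ F, ∀ t ∈ T, t * z = z * t := by
      intro z hz t ht
      have htC : t ∈ C := hTC ht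
      exact (Subgroup.mem_centralizer_iff.1 htC z (Subgroup.mem_inf.1 hz).2).symm
    have hcommSb : ⁅Sb, Sb⁆ = ⊥ ∨ ⁅Sb, Sb⁆ = Sb := by
      refine hSb.2.2 _ ?_ ?_
      · haveI := hSb.1
        infer_instance
      · rw [Subgroup.commutator_le]
        intro g₁ h₁ g₂ h₂
        rw [commutatorElement_def]
        have h3 : g₂ * g₁⁻¹ * g₂⁻¹ ∈ Sb := by
          simpa using hSb.1.conj_mem g₁⁻¹ (inv_mem h₁) g₂
        have e : g₁ * g₂ * g₁⁻¹ * g₂⁻¹ = g₁ * (g₂ * g₁⁻¹ * g₂⁻¹) := by group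
        rw [e]; exact mul_mem h₁ h3
    rcases hcommSb with hab | hperf
    · -- CASE A: Sb abelian
      have hSmab : ∀ a ∈ Sm, ∀ b ∈ Sm, a * b = b * a := by
        rintro a ⟨a0, ha0, rfl⟩ b ⟨b0, hb0, rfl⟩
        have h1 : ⁅a0, b0⁆ ∈ (⁅Sb, Sb⁆ : Subgroup ↥Mgr) :=
          Subgroup.commutator_mem_commutator ha0 hb0
        rw [hab, Subgroup.mem_bot] at h1
        have h2 := commutatorElement_eq_one_iff_mul_comm.1 h1
        have h3 := congrArg (Subtype.val) h2
        simpa using h3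
      have hTcomm : ∀ a ∈ T, ∀ b ∈ T, a * b * a⁻¹ * b⁻¹ ∈ T ⊓ F := by
        intro a ha b hb
        refine Subgroup.mem_inf.2 ⟨?_, ?_⟩
        · exact T.mul_mem (T.mul_mem (T.mul_mem ha hb) (T.inv_mem ha)) (T.inv_mem hb)
        · refine (QuotientGroup.eq_one_iff _).1 ?_
          have haS : ρF a ∈ Sm := by rw [← hmapT]; exact ⟨a, ha, rfl⟩
          have hbS : ρF b ∈ Sm := by rw [← hmapT]; exact ⟨b, hb, rfl⟩
          have hcm := hSmab _ haS _ hbS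
          show ρF (a * b * a⁻¹ * b⁻¹) = 1
          rw [map_mul, map_mul, map_mul, map_inv, map_inv, hcm]
          group
      have hTnil : Group.IsNilpotent ↥T := by
        refine ⟨2, ?_⟩
        rw [eq_top_iff]
        intro x _
        rw [mem_upperCentralSeries_succ_iff]
        intro y
        rw [upperCentralSeries_one]
        rw [Subgroup.mem_center_iff]
        intro z
        apply Subtype.ext
        exact hcent _ (hTcomm x.1 x.2 y.1 y.2) z.1 z.2
      set Yb := Subgroup.map π CF with hYbdef
      have hYbn : Yb.Normal := hCFnormal.map π hπsurj
      set Kb := Subgroup.map π T with hKbdef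
      have hKbY : Kb ≤ Yb := Subgroup.map_mono hTCF
      have hfrYb : frattini ↥Yb = ⊥ := frattini_subgroup_eq_bot hfrH Yb hYbn
      have hKb0n : (Kb.subgroupOf Yb).Normal := by
        constructor
        intro u hu y
        rw [Subgroup.mem_subgroupOf] at hu ⊢
        obtain ⟨yc, hyc, hyce⟩ := y.2
        obtain ⟨t0, ht0, ht0e⟩ := hu
        have e : (y : G ⧸ Φ) * u * (y : G ⧸ Φ)⁻¹ = π (yc * t0 * yc⁻¹) := by
          rw [map_mul, map_mul, map_inv, hyce, ht0e]
        show ((y * u * y⁻¹ : ↥Yb) : G ⧸ Φ) ∈ Kb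
        have e2 : ((y * u * y⁻¹ : ↥Yb) : G ⧸ Φ)
            = (y : G ⧸ Φ) * u * (y : G ⧸ Φ)⁻¹ := rfl
        rw [e2, e]
        exact ⟨_, hTinv yc hyc t0 ht0, rfl⟩
      have hKb0nil : Group.IsNilpotent ↥(Kb.subgroupOf Yb) := by
        have e1 : ↥(Kb.subgroupOf Yb) ≃* ↥Kb := Subgroup.subgroupOfEquivOfLe hKbY
        haveI h2 : Group.IsNilpotent ↥Kb :=
          nilpotent_of_surjective (π.subgroupMap T) (π.subgroupMap_surjective T)
        exact nilpotent_of_surjective e1.symm.toMonoidHom (MulEquiv.surjective e1.symm)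
      have hKb0soc := nilpotent_normal_le_socle hfrYb hKb0n hKb0nil
      have hKbsoc : Kb ≤ socle' (G ⧸ Φ) := by
        have h3 : Kb = (Kb.subgroupOf Yb).map Yb.subtype := by
          rw [Subgroup.subgroupOf_map_subtype, inf_eq_left.2 hKbY]
        rw [h3]
        exact (Subgroup.map_mono hKb0soc).trans (socle_map_subtype_le hfrH Yb hYbn)
      refine hFt S ?_
      rw [hST, Subgroup.map_sup]
      exact sup_le hKbsoc hFitmap
    · -- CASE B: Sb perfect
      have hSmperf : ⁅Sm, Sm⁆ = Sm := by
        rw [hSmdef, ← Subgroup.map_commutator, hperf]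
      set Dn : ℕ → Subgroup G := fun n => Nat.rec T (fun _ D => ⁅D, D⁆) n with hDn
      have hDn0 : Dn 0 = T := rfl
      have hDnsucc : ∀ n, Dn (n + 1) = ⁅Dn n, Dn n⁆ := fun n => rfl
      have hDnle : ∀ n, Dn (n + 1) ≤ Dn n := by
        intro n
        rw [hDnsucc, Subgroup.commutator_le]
        intro g1 h1 g2 h2
        rw [commutatorElement_def]
        exact mul_mem (mul_mem (mul_mem h1 h2) (inv_mem h1)) (inv_mem h2)
      have hDnT : ∀ n, Dn n ≤ T := by
        intro n
        induction n with
        | zero => exact le_rfl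
        | succ n ih => exact (hDnle n).trans ih
      have hDninv : ∀ n, ∀ y ∈ CF, ∀ x ∈ Dn n, y * x * y⁻¹ ∈ Dn n := by
        intro n
        induction n with
        | zero => exact hTinv
        | succ n ih =>
          intro y hy x hx
          have h2 : (Dn n).map (MulAut.conj y).toMonoidHom ≤ Dn n := by
            rintro a ⟨a0, ha0, rfl⟩
            simpa using ih y hy a0 ha0
          have h1 : y * x * y⁻¹ ∈ (⁅Dn n, Dn n⁆ : Subgroup G).map
              (MulAut.conj y).toMonoidHom := by
            rw [hDnsucc] at hx
            exact ⟨x, hx, by simp⟩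
          rw [Subgroup.map_commutator] at h1
          rw [hDnsucc]
          exact Subgroup.commutator_mono h2 h2 h1
      have hmapDn : ∀ n, Subgroup.map ρF (Dn n) = Sm := by
        intro n
        induction n with
        | zero => exact hmapT
        | succ n ih => rw [hDnsucc, Subgroup.map_commutator, ih, hSmperf]
      have hSDn : ∀ n, S = Dn n ⊔ F := by
        intro n
        have h2 : Subgroup.map ρF (Dn n ⊔ F) = Sm := by
          rw [Subgroup.map_sup, hmapDn n, hmapF, sup_bot_eq]
        have h1 : Subgroup.comap ρF (Subgroup.map ρF (Dn n ⊔ F)) = (Dn n ⊔ F) ⊔ F := by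
          rw [Subgroup.comap_map_eq, QuotientGroup.ker_mk']
        rw [h2] at h1
        calc S = Subgroup.comap ρF Sm := rfl
          _ = (Dn n ⊔ F) ⊔ F := h1
          _ = Dn n ⊔ F := by rw [sup_assoc, sup_idem]
      have hstab : ∃ n, Dn (n + 1) = Dn n := by
        by_contra hc
        push_neg at hc
        have hlt : ∀ n, Nat.card ↥(Dn (n + 1)) < Nat.card ↥(Dn n) := by
          intro n
          have h1 : ((Dn (n + 1) : Set G)) ⊂ (Dn n : Set G) := by
            refine ⟨hDnle n, fun hsub => hc n ?_⟩
            exact le_antisymm (hDnle n) fun x hx => hsub hx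
          have hcard : ∀ K : Subgroup G, Nat.card ↥K = (K : Set G).ncard := by
            intro K
            rw [← SetLike.coe_sort_coe, Nat.card_coe_set_eq]
          rw [hcard, hcard]
          exact Set.ncard_lt_ncard h1 (Set.toFinite _)
        have hdesc : ∀ n, Nat.card ↥(Dn n) + n ≤ Nat.card ↥(Dn 0) := by
          intro n
          induction n with
          | zero => simp
          | succ n ih =>
            have := hlt n
            omega
        have h3 := hdesc (Nat.card ↥(Dn 0) + 1)
        have hpos : 0 < Nat.card ↥(Dn (Nat.card ↥(Dn 0) + 1)) := Nat.card_pos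
        omega
      obtain ⟨n0, hn0⟩ := hstab
      set R := Dn n0 with hRdef
      have hRperf : ⁅R, R⁆ = R := by rw [hRdef, ← hDnsucc]; exact hn0
      have hRT : R ≤ T := hDnT n0
      have hRCF : R ≤ CF := hRT.trans hTCF
      have hRinv : ∀ y ∈ CF, ∀ x ∈ R, y * x * y⁻¹ ∈ R := hDninv n0
      have hmapR : Subgroup.map ρF R = Sm := hmapDn n0
      have hSR : S = R ⊔ F := hSDn n0
      have hZcent : ∀ z ∈ R ⊓ F, ∀ r ∈ R, r * z = z * r := by
        intro z hz r hr
        have hrC : r ∈ C := hTC (hRT hr)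
        exact (Subgroup.mem_centralizer_iff.1 hrC z (Subgroup.mem_inf.1 hz).2).symm
      have hZmax : ∀ M, IsMaxIn M R → R ⊓ F ≤ M := by
        intro M hM z hz
        have hzR : z ∈ R := (Subgroup.mem_inf.1 hz).1
        have hzc : (⟨z, hzR⟩ : ↥R) ∈ Subgroup.center ↥R := by
          rw [Subgroup.mem_center_iff]
          intro g
          exact Subtype.ext (hZcent z hz g.1 g.2)
        have hmaptopR : Subgroup.map R.subtype ⊤ = R := by
          rw [← Subgroup.top_subgroupOf R, Subgroup.subgroupOf_map_subtype, top_inf_eq]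
        have hperfR : ⁅(⊤ : Subgroup ↥R), (⊤ : Subgroup ↥R)⁆ = ⊤ := by
          refine Subgroup.map_injective (Subgroup.subtype_injective R) ?_
          rw [Subgroup.map_commutator, hmaptopR, hRperf]
        have hzfr := center_le_frattini_of_perfect hperfR hzc
        exact frattini_map_subtype_le hM ⟨⟨z, hzR⟩, hzfr, rfl⟩
      have hRFinv : ∀ y ∈ CF, ∀ v ∈ R ⊓ F, y * v * y⁻¹ ∈ R ⊓ F := by
        intro y hy v hv
        rw [Subgroup.mem_inf] at hv ⊢
        exact ⟨hRinv y hy v hv.1, hFnormal.conj_mem v hv.2 y⟩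
      have hpush1 : ∀ M, IsMaxIn M CF → R ⊓ F ≤ M := by
        intro M hM
        exact maxIn_push hRCF inf_le_left hRFinv hZmax hM
      set N2 := CF ⊓ ⨅ M ∈ {M : Subgroup G | IsMaxIn M CF}, M with hN2def
      have hN2RF : R ⊓ F ≤ N2 := by
        refine le_inf (inf_le_left.trans hRCF) ?_
        exact le_iInf fun M => le_iInf fun hM => hpush1 M hM
      have hN2inv : ∀ g : G, ∀ v ∈ N2, g * v * g⁻¹ ∈ N2 := by
        intro g v hv
        rw [hN2def, Subgroup.mem_inf] at hv ⊢
        constructor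
        · exact hCFnormal.conj_mem v hv.1 g
        · simp only [Subgroup.mem_iInf] at hv ⊢
          intro M
          intro hM
          have hMg : IsMaxIn (cnj g⁻¹ M) CF := by
            have h0 := isMaxIn_cnj hM g⁻¹
            rwa [cnj_eq_self_of_normal hCFnormal] at h0
          have h1 := hv.2 (cnj g⁻¹ M) hMg
          rw [mem_cnj] at h1
          have e : g⁻¹⁻¹ * v * g⁻¹ = g * v * g⁻¹ := by group
          rwa [e] at h1
      have hpush2 : R ⊓ F ≤ Φ := by
        refine hN2RF.trans ?_
        refine le_frattini fun M hM => ?_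
        refine maxIn_push le_top (inf_le_left : N2 ≤ CF)
          (fun b _ v hv => hN2inv b v hv) ?_ (isCoatom_iff_isMaxIn_top.1 hM)
        intro M' hM'
        exact inf_le_right.trans (biInf_le _ hM')
      set Yb := Subgroup.map π CF with hYbdef
      have hYbn : Yb.Normal := hCFnormal.map π hπsurj
      set X := Subgroup.map π R with hXdef
      have hXY : X ≤ Yb := Subgroup.map_mono hRCF
      have hρle : Φ ≤ Subgroup.comap (MonoidHom.id G) F := by simpa using hΦF
      set ρ : (G ⧸ Φ) →* (G ⧸ F) := QuotientGroup.map Φ F (MonoidHom.id G) hρle with hρdef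
      have hρπ : ∀ g : G, ρ (π g) = ρF g := by
        intro g
        rw [hρdef, hπdef, hρFdef]
        simp [QuotientGroup.map_mk']
      have hmapρ : ∀ A : Subgroup G, Subgroup.map ρ (Subgroup.map π A)
          = Subgroup.map ρF A := by
        intro A
        rw [Subgroup.map_map]
        exact congrArg (fun f => Subgroup.map f A) (MonoidHom.ext hρπ)
      have hmapX : Subgroup.map ρ X = Sm := by rw [hXdef, hmapρ, hmapR]
      have hinjX : ∀ x ∈ X, ρ x = 1 → x = 1 := by
        intro x hx hx1
        obtain ⟨r, hr, rfl⟩ := hx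
        have h1 : ρF r = 1 := by rw [← hρπ r]; exact hx1
        have h2 : r ∈ F := (QuotientGroup.eq_one_iff r).1 h1
        have h3 : r ∈ Φ := hpush2 (Subgroup.mem_inf.2 ⟨hr, h2⟩)
        exact (QuotientGroup.eq_one_iff r).2 h3
      have hXsoc : X ≤ socle' (G ⧸ Φ) := by
        refine minNormalIn_le_socle hfrH hYbn hXY ?_ ?_ ?_
        · intro hXb
          have h0 : Sm = ⊥ := by rw [← hmapX, hXb, Subgroup.map_bot]
          exact hSmbot h0
        · intro y hy w hw
          obtain ⟨yc, hyc, rfl⟩ := hy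
          obtain ⟨r, hr, rfl⟩ := hw
          have e : π yc * π r * (π yc)⁻¹ = π (yc * r * yc⁻¹) := by
            rw [map_mul, map_mul, map_inv]
          rw [e]
          exact ⟨_, hRinv yc hyc r hr, rfl⟩
        · intro V hVX hVinv
          set U := Subgroup.map ρ V with hUdef
          have hUSm : U ≤ Sm := by rw [← hmapX]; exact Subgroup.map_mono hVX
          have hUinv : ∀ m ∈ Mgr, ∀ u ∈ U, m * u * m⁻¹ ∈ U := by
            intro m hm u hu
            obtain ⟨yc, hyc, rfl⟩ := hm
            obtain ⟨v, hv, rfl⟩ := hu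
            have h1 : π yc ∈ Yb := ⟨yc, hyc, rfl⟩
            have h2 := hVinv (π yc) h1 v hv
            refine ⟨π yc * v * (π yc)⁻¹, h2, ?_⟩
            rw [map_mul, map_mul, map_inv, hρπ]
          rcases hminSm U hUSm hUinv with h | h
          · left
            rw [eq_bot_iff]
            intro v hv
            have h1 : ρ v ∈ U := ⟨v, hv, rfl⟩
            rw [h, Subgroup.mem_bot] at h1
            rw [Subgroup.mem_bot]
            exact hinjX v (hVX hv) h1
          · right
            refine le_antisymm hVX ?_
            intro x hx
            have h1 : ρ x ∈ Sm := by rw [← hmapX]; exact ⟨x, hx, rfl⟩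
            rw [← h] at h1
            obtain ⟨v, hv, hve⟩ := h1
            have h2 : v⁻¹ * x ∈ X := X.mul_mem (X.inv_mem (hVX hv)) hx
            have h3 : ρ (v⁻¹ * x) = 1 := by rw [map_mul, map_inv, hve]; group
            have h4 := hinjX _ h2 h3
            have h5 : x = v := by
              have e : x = v * (v⁻¹ * x) := by group
              rw [e, h4, mul_one]
            rwa [h5]
      refine hFt S ?_
      rw [hSR, Subgroup.map_sup]
      exact sup_le hXsoc hFitmap
  -- assemble: decompose FStar as a join
  have hdecomp : Subgroup.comap ρF (Subgroup.map Mgr.subtype (socle' ↥Mgr))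
      ≤ Ftilde G := by
    have h1 : Subgroup.map Mgr.subtype (socle' ↥Mgr)
        = sSup ((fun B => Subgroup.map Mgr.subtype B) ''
            {Sb : Subgroup ↥Mgr | IsMinimalNormal Sb}) := by
      rw [socle', (Subgroup.gc_map_comap Mgr.subtype).l_sSup, sSup_image]
    rw [h1, comap_sSup_of_surjective ρF hρFsurj]
    refine sup_le ?_ ?_
    · refine iSup₂_le ?_
      rintro B ⟨Sb, hSb, rfl⟩
      exact key Sb hSb
    · rw [QuotientGroup.ker_mk']
      exact hFt F hFitmap
  exact hdecomp
end
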